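/- arXiv:1412.1497 — 14 statements merged into one kernel-verified Lean document; each statement's English description precedes it below -/
import Mathlib

section
/- If G is a topological group with a countable cn-network at the identity element and G is separable, then G has a countable cn-network (i.e., G is cosmic if additionally regular). -/
open Filter Set Topology Pointwise Bornology

section Defs

variable {X : Type*} [TopologicalSpace X]

/-- `N` is a network at `x`: every neighborhood of `x` contains a member of `N` containing `x`. -/
def IsNetworkAt (N : Set (Set X)) (x : X) : Prop :=
  ∀ O ∈ nhds x, ∃ n ∈ N, x ∈ n ∧ n ⊆ O

/-- `N` is a `cn`-network at `x`. -/
def IsCnNetworkAt (N : Set (Set X)) (x : X) : Prop :=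
  ∀ O ∈ nhds x, (⋃₀ {n | n ∈ N ∧ x ∈ n ∧ n ⊆ O}) ∈ nhds x

/-- `N` is a `cp`-network (Pytkeev network with `x ∈ N`) at `x`. -/
def IsCpNetworkAt (N : Set (Set X)) (x : X) : Prop :=
  IsNetworkAt N x ∧
  ∀ A : Set X, x ∈ closure A \ A → ∀ O ∈ nhds x,
    ∃ n ∈ N, x ∈ n ∧ n ⊆ O ∧ (n ∩ A).Infinite

/-- `N` is a `ck`-network at `x`. -/
def IsCkNetworkAt (N : Set (Set X)) (x : X) : Prop :=
  ∀ O ∈ nhds x, ∃ U ∈ nhds x, ∀ K : Set X, K ⊆ U → IsCompact K →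
    ∃ F : Finset (Set X), ↑F ⊆ N ∧ (∀ f ∈ F, x ∈ f) ∧
      K ⊆ ⋃₀ ↑F ∧ ⋃₀ (↑F : Set (Set X)) ⊆ O

/-- `N` is a `cs*`-network at `x`. -/
def IsCsStarNetworkAt (N : Set (Set X)) (x : X) : Prop :=
  ∀ u : ℕ → X, Tendsto u atTop (nhds x) → ∀ O ∈ nhds x,
    ∃ n ∈ N, x ∈ n ∧ n ⊆ O ∧ {k | u k ∈ n}.Infinite

/-- `N` is a network for the topology of `X`. -/
def IsNetwork (N : Set (Set X)) : Prop :=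
  ∀ O : Set X, IsOpen O → ∀ x ∈ O, ∃ n ∈ N, x ∈ n ∧ n ⊆ O

/-- The set `D_k(α)`: the intersection of all `U β` over `β ∈ M` agreeing with `α`
on the first `k` coordinates. -/
def Dk (M : Set (ℕ → ℕ)) (U : (ℕ → ℕ) → Set X) (k : ℕ) (α : ℕ → ℕ) : Set X :=
  ⋂ β ∈ {β ∈ M | ∀ i < k, β i = α i}, U β

/-- `{U α : α ∈ M}` is an `M`-decreasing neighborhood base (small base) at `x`. -/
def IsSmallBaseAt (M : Set (ℕ → ℕ)) (U : (ℕ → ℕ) → Set X) (x : X) : Prop :=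
  (∀ α ∈ M, ∀ β ∈ M, α ≤ β → U β ⊆ U α) ∧
  (∀ α ∈ M, U α ∈ nhds x) ∧
  (∀ O ∈ nhds x, ∃ α ∈ M, U α ⊆ O)

/-- `{U α : α ∈ M}` is an `M`-decreasing base of the topology (small base of `X`). -/
def IsSmallBaseTop (M : Set (ℕ → ℕ)) (U : (ℕ → ℕ) → Set X) : Prop :=
  (∀ α ∈ M, ∀ β ∈ M, α ≤ β → U β ⊆ U α) ∧
  (∀ α ∈ M, IsOpen (U α)) ∧
  (∀ O : Set X, IsOpen O → ∀ x ∈ O, ∃ α ∈ M, x ∈ U α ∧ U α ⊆ O)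

/-- Condition (D): `U α = ⋃ₖ D_k(α)` for every `α ∈ M`. -/
def CondD (M : Set (ℕ → ℕ)) (U : (ℕ → ℕ) → Set X) : Prop :=
  ∀ α ∈ M, U α = ⋃ k : ℕ, Dk M U k α

end Defs

/-- The strong Pytkeev property of Tsaban and Zdomskyy. -/
def HasStrongPytkeev (X : Type*) [TopologicalSpace X] : Prop :=
  ∀ x : X, ∃ D : Set (Set X), D.Countable ∧
    ∀ U ∈ nhds x, ∀ A : Set X, x ∈ closure A \ A →
      ∃ d ∈ D, d ⊆ U ∧ (d ∩ A).Infinite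

theorem statement0 {G : Type*} [Group G] [TopologicalSpace G] [IsTopologicalGroup G]
    [TopologicalSpace.SeparableSpace G]
    (N : Set (Set G)) (hNc : N.Countable) (hN : IsCnNetworkAt N (1 : G)) :
    ∃ N' : Set (Set G), N'.Countable ∧ ∀ x : G, IsCnNetworkAt N' x := by
  obtain ⟨D, hDc, hDd⟩ := TopologicalSpace.exists_countable_dense G
  refine ⟨(fun p : G × Set G × Set G => p.1 • (p.2.1 * p.2.2)) '' (D ×ˢ N ×ˢ N),
    (hDc.prod (hNc.prod hNc)).image _, fun x O hO => ?_⟩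
  -- translate O to a neighborhood of 1
  have hO' : x⁻¹ • O ∈ nhds (1 : G) := by
    have := smul_mem_nhds_smul x⁻¹ hO
    simpa using this
  obtain ⟨U₁, hU₁o, hU₁1, hU₁m⟩ := exists_open_nhds_one_mul_subset hO'
  obtain ⟨U₂, hU₂o, hU₂1, hU₂m⟩ := exists_open_nhds_one_mul_subset (hU₁o.mem_nhds hU₁1)
  set U : Set G := (U₁ ∩ U₂) ∩ (U₁ ∩ U₂)⁻¹ with hUdef
  have hUo : IsOpen U := (hU₁o.inter hU₂o).inter (hU₁o.inter hU₂o).inv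
  have hU1 : (1 : G) ∈ U := by
    simp [hUdef, hU₁1, hU₂1]
  have hUsym : U⁻¹ = U := by
    simp [hUdef, Set.inter_comm]
  have hU_sub₁ : U ⊆ U₁ := fun a ha => ha.1.1
  have hU_sub₂ : U ⊆ U₂ := fun a ha => ha.1.2
  have hUUU : U * U * U ⊆ x⁻¹ • O := by
    calc U * U * U ⊆ U₂ * U₂ * U₁ :=
          Set.mul_subset_mul (Set.mul_subset_mul hU_sub₂ hU_sub₂) hU_sub₁
      _ ⊆ U₁ * U₁ := Set.mul_subset_mul_right hU₂m
      _ ⊆ x⁻¹ • O := hU₁m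
  -- the cn-union at 1 for U
  have hS : (⋃₀ {n | n ∈ N ∧ (1 : G) ∈ n ∧ n ⊆ U}) ∈ nhds (1 : G) :=
    hN U (hUo.mem_nhds hU1)
  set S : Set G := ⋃₀ {n | n ∈ N ∧ (1 : G) ∈ n ∧ n ⊆ U} with hSdef
  set W : Set G := interior S with hWdef
  have hWo : IsOpen W := isOpen_interior
  have hW1 : (1 : G) ∈ W := mem_interior_iff_mem_nhds.2 hS
  have hWS : W ⊆ S := interior_subset
  -- pick d ∈ D with d⁻¹ * x ∈ W
  have hpre : IsOpen ((fun g : G => g⁻¹ * x) ⁻¹' W) :=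
    hWo.preimage ((continuous_id.inv).mul continuous_const)
  obtain ⟨d, hdD, hdW⟩ := hDd.exists_mem_open hpre ⟨x, by simpa using hW1⟩
  have hdW : d⁻¹ * x ∈ W := hdW
  obtain ⟨n₁, ⟨hn₁N, hn₁1, hn₁U⟩, hdxn₁⟩ := hWS hdW
  -- the member x⁻¹ * d of U
  have hxdU : x⁻¹ * d ∈ U := by
    have : (d⁻¹ * x)⁻¹ ∈ U⁻¹ := Set.inv_mem_inv.2 (hn₁U hdxn₁)
    rwa [hUsym, mul_inv_rev, inv_inv] at this
  -- the union is a neighborhood of x since it contains x • W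
  refine Filter.mem_of_superset ((hWo.smul x).mem_nhds ?_) ?_
  · rw [mem_smul_set_iff_inv_smul_mem]
    simpa using hW1
  intro y hy
  have hxy : x⁻¹ * y ∈ W := by
    rw [mem_smul_set_iff_inv_smul_mem, smul_eq_mul] at hy
    exact hy
  obtain ⟨n₂, ⟨hn₂N, hn₂1, hn₂U⟩, hxyn₂⟩ := hWS hxy
  refine ⟨d • (n₁ * n₂), ⟨⟨(d, n₁, n₂), ⟨hdD, hn₁N, hn₂N⟩, rfl⟩, ?_, ?_⟩, ?_⟩
  · -- x ∈ d • (n₁ * n₂)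
    rw [mem_smul_set_iff_inv_smul_mem, smul_eq_mul]
    have := Set.mul_mem_mul hdxn₁ hn₂1
    simpa using this
  · -- d • (n₁ * n₂) ⊆ O
    intro z hz
    rw [mem_smul_set_iff_inv_smul_mem, smul_eq_mul] at hz
    obtain ⟨a, ha, b, hb, hab⟩ := hz
    have hmem : x⁻¹ * d * a * b ∈ U * U * U :=
      Set.mul_mem_mul (Set.mul_mem_mul hxdU (hn₁U ha)) (hn₂U hb)
    have := hUUU hmem
    have hab' : a * b = d⁻¹ * z := hab
    have heq : x⁻¹ * d * a * b = x⁻¹ * z := by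
      rw [mul_assoc (x⁻¹ * d), hab']; group
    rw [heq] at this
    rwa [show x⁻¹ * z = x⁻¹ • z from rfl, smul_mem_smul_set_iff] at this
  · -- y ∈ d • (n₁ * n₂)
    rw [mem_smul_set_iff_inv_smul_mem, smul_eq_mul]
    have := Set.mul_mem_mul hdxn₁ hxyn₂
    have heq : (d⁻¹ * x) * (x⁻¹ * y) = d⁻¹ * y := by group
    rwa [heq] at this
end

section
/- If G is a topological group with a countable cp-network at the identity element and G is separable, then G has a countable cp-network. -/
open Filter Set Topology Pointwise Bornology

/-- A symmetric open neighborhood `W` of `1` with `x * (W * (W * W)) ⊆ O`. -/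
lemma exists_symm_W {G : Type*} [Group G] [TopologicalSpace G] [IsTopologicalGroup G]
    (x : G) {O : Set G} (hO : O ∈ nhds x) :
    ∃ W : Set G, IsOpen W ∧ (1 : G) ∈ W ∧ (∀ w ∈ W, w⁻¹ ∈ W) ∧
      ∀ a ∈ W, ∀ b ∈ W, ∀ c ∈ W, x * (a * (b * c)) ∈ O := by
  have h1 : (fun g : G => x * g) ⁻¹' O ∈ nhds (1 : G) := by
    have hc : ContinuousAt (fun g : G => x * g) 1 := (continuous_mul_left x).continuousAt
    exact hc.preimage_mem_nhds (by simpa using hO)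
  obtain ⟨V₁, hV₁o, hV₁1, hV₁⟩ := exists_open_nhds_one_mul_subset h1
  obtain ⟨V, hVo, hV1, hV⟩ := exists_open_nhds_one_mul_subset (hV₁o.mem_nhds hV₁1)
  have hVsub : V ⊆ V₁ := fun v hv => by
    have : v * 1 ∈ V₁ := hV (Set.mul_mem_mul hv hV1)
    simpa using this
  refine ⟨V ∩ V⁻¹, hVo.inter (hVo.preimage continuous_inv), ⟨hV1, by simpa⟩, ?_, ?_⟩
  · rintro w ⟨hw1, hw2⟩
    exact ⟨by simpa using hw2, by simpa using hw1⟩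
  · rintro a ⟨ha, -⟩ b ⟨hb, -⟩ c ⟨hc, -⟩
    have hbc : b * c ∈ V₁ := hV (Set.mul_mem_mul hb hc)
    have : a * (b * c) ∈ V₁ * V₁ := Set.mul_mem_mul (hVsub ha) hbc
    exact hV₁ this

/-- Key lemma: a member of `N` inside `W` containing `d⁻¹ * x` for some `d` in the dense set. -/
lemma key_lemma {G : Type*} [Group G] [TopologicalSpace G] [IsTopologicalGroup G]
    {N : Set (Set G)} (hN : IsCpNetworkAt N (1 : G))
    {D : Set G} (hDd : Dense D) (x : G) {W : Set G} (hWo : IsOpen W) (hW1 : (1 : G) ∈ W) :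
    ∃ d ∈ D, ∃ n ∈ N, d⁻¹ * x ∈ n ∧ n ⊆ W := by
  by_cases hxD : x ∈ D
  · obtain ⟨n, hnN, h1n, hnW⟩ := hN.1 W (hWo.mem_nhds hW1)
    exact ⟨x, hxD, n, hnN, by simpa using h1n, hnW⟩
  · set B : Set G := (fun d : G => d⁻¹ * x) '' D with hB
    have h1cl : (1 : G) ∈ closure B := by
      rw [mem_closure_iff_nhds]
      intro U hU
      have hc : ContinuousAt (fun d : G => d⁻¹ * x) x :=
        (continuous_inv.mul continuous_const).continuousAt
      have hpre : (fun d : G => d⁻¹ * x) ⁻¹' U ∈ nhds x :=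
        hc.preimage_mem_nhds (by simpa using hU)
      obtain ⟨d, hdU, hdD⟩ := mem_closure_iff_nhds.mp (hDd x) _ hpre
      exact ⟨d⁻¹ * x, hdU, d, hdD, rfl⟩
    have h1nB : (1 : G) ∉ B := by
      rintro ⟨d, hdD, hd1⟩
      have hd1' : d⁻¹ * x = 1 := hd1
      exact hxD ((inv_mul_eq_one.mp hd1') ▸ hdD)
    obtain ⟨n, hnN, h1n, hnW, hinf⟩ := hN.2 B ⟨h1cl, h1nB⟩ W (hWo.mem_nhds hW1)
    obtain ⟨b, hbn, d, hdD, hdb⟩ := hinf.nonempty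
    have hdb' : d⁻¹ * x = b := hdb
    exact ⟨d, hdD, n, hnN, hdb' ▸ hbn, hnW⟩

theorem statement1 {G : Type*} [Group G] [TopologicalSpace G] [IsTopologicalGroup G]
    [TopologicalSpace.SeparableSpace G]
    (N : Set (Set G)) (hNc : N.Countable) (hN : IsCpNetworkAt N (1 : G)) :
    ∃ N' : Set (Set G), N'.Countable ∧ ∀ x : G, IsCpNetworkAt N' x := by
  obtain ⟨D, hDc, hDd⟩ := TopologicalSpace.exists_countable_dense G
  refine ⟨(fun p : G × Set G × Set G => p.1 • (p.2.1 * p.2.2)) '' (D ×ˢ N ×ˢ N),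
    ((hDc.prod (hNc.prod hNc)).image _), fun x => ?_⟩
  -- common construction: given O ∈ nhds x, find d ∈ D, n ∈ N with d⁻¹x ∈ n and
  -- such that for any m ∈ N inside W, d • (n * m) ⊆ O and x • m ⊆ d • (n * m).
  have main : ∀ O ∈ nhds x, ∃ W : Set G, W ∈ nhds (1 : G) ∧ ∃ d ∈ D, ∃ n ∈ N,
      d⁻¹ * x ∈ n ∧ (∀ m : Set G, m ⊆ W → d • (n * m) ⊆ O) ∧
      (∀ m : Set G, ∀ b ∈ m, x * b ∈ d • (n * m)) := by
    intro O hO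
    obtain ⟨W, hWo, hW1, hWs, hW⟩ := exists_symm_W x hO
    obtain ⟨d, hdD, n, hnN, hdxn, hnW⟩ := key_lemma hN hDd x hWo hW1
    have hxdW : x⁻¹ * d ∈ W := by
      have := hWs _ (hnW hdxn)
      simpa [mul_inv_rev] using this
    refine ⟨W, hWo.mem_nhds hW1, d, hdD, n, hnN, hdxn, ?_, ?_⟩
    · intro m hmW y hy
      obtain ⟨z, hz, rfl⟩ := hy
      obtain ⟨p, hp, q, hq, rfl⟩ := hz
      have : x * ((x⁻¹ * d) * (p * q)) ∈ O := hW _ hxdW _ (hnW hp) _ (hmW hq)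
      have he : x * ((x⁻¹ * d) * (p * q)) = d • (p * q) := by
        simp [smul_eq_mul]; group
      rwa [he] at this
    · intro m b hb
      exact ⟨(d⁻¹ * x) * b, Set.mul_mem_mul hdxn hb, by simp [smul_eq_mul]; group⟩
  constructor
  · -- network at x
    intro O hO
    obtain ⟨W, hWnhds, d, hdD, n, hnN, hdxn, hsub, hmem⟩ := main O hO
    obtain ⟨m, hmN, h1m, hmW⟩ := hN.1 W hWnhds
    refine ⟨d • (n * m), ⟨(d, n, m), ⟨hdD, hnN, hmN⟩, rfl⟩, ?_, hsub m hmW⟩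
    simpa using hmem m 1 h1m
  · -- Pytkeev condition at x
    intro A hA O hO
    obtain ⟨W, hWnhds, d, hdD, n, hnN, hdxn, hsub, hmem⟩ := main O hO
    set A' : Set G := (fun g : G => x⁻¹ * g) '' A with hA'
    have h1cl : (1 : G) ∈ closure A' := by
      have himg := image_closure_subset_closure_image (s := A)
        (f := fun g : G => x⁻¹ * g) (continuous_const.mul continuous_id)
      have hx : x⁻¹ * x ∈ (fun g : G => x⁻¹ * g) '' closure A := ⟨x, hA.1, rfl⟩
      have h2 := himg hx
      rw [inv_mul_cancel] at h2
      exact h2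
    have h1nA' : (1 : G) ∉ A' := by
      rintro ⟨a, haA, ha1⟩
      have ha1' : x⁻¹ * a = 1 := ha1
      exact hA.2 ((inv_mul_eq_one.mp ha1').symm ▸ haA)
    obtain ⟨m, hmN, h1m, hmW, hinf⟩ := hN.2 A' ⟨h1cl, h1nA'⟩ W hWnhds
    refine ⟨d • (n * m), ⟨(d, n, m), ⟨hdD, hnN, hmN⟩, rfl⟩, ?_, hsub m hmW, ?_⟩
    · simpa using hmem m 1 h1m
    · have himg : ((fun b : G => x * b) '' (m ∩ A')).Infinite :=
        hinf.image (Set.injOn_of_injective (mul_right_injective x))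
      refine himg.mono ?_
      rintro y ⟨b, ⟨hbm, a, haA, rfl⟩, rfl⟩
      refine ⟨hmem m _ hbm, ?_⟩
      simpa using haA
end

section
/- A topological space X has a countable cn-network at a point x if and only if X has a small base {U_α : α ∈ M} at x (an M-decreasing base of neighborhoods of x indexed by some subset M of ℕ^ℕ with the natural partial order) satisfying the condition (D): U_α = ⋃_{k∈ℕ} D_k(α) for every α ∈ M, where D_k(α) = ⋂{U_β : β ∈ M, β_i = α_i for i = 1,…,k}. Moreover, in that case the countable family {D_k(α) : α ∈ M, k ∈ ℕ} is a countable cn-network at x. -/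
open Filter Set Topology Pointwise Bornology

section Aux

variable {X : Type*} [TopologicalSpace X]

lemma Dk_congr (M : Set (ℕ → ℕ)) (U : (ℕ → ℕ) → Set X) (k : ℕ) {α α' : ℕ → ℕ}
    (h : ∀ i < k, α i = α' i) : Dk M U k α = Dk M U k α' := by
  have hset : {β ∈ M | ∀ i < k, β i = α i} = {β ∈ M | ∀ i < k, β i = α' i} := by
    ext β
    exact and_congr_right fun _ => forall₂_congr fun i hi => by rw [h i hi]
  unfold Dk
  rw [hset]

lemma Dk_mono (M : Set (ℕ → ℕ)) (U : (ℕ → ℕ) → Set X) {k k' : ℕ} (hk : k ≤ k')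
    (α : ℕ → ℕ) : Dk M U k α ⊆ Dk M U k' α := by
  intro y hy
  simp only [Dk, Set.mem_iInter, Set.mem_setOf_eq] at hy ⊢
  exact fun β hβ => hy β ⟨hβ.1, fun i hi => hβ.2 i (lt_of_lt_of_le hi hk)⟩

lemma Dk_subset (M : Set (ℕ → ℕ)) (U : (ℕ → ℕ) → Set X) (k : ℕ) {α : ℕ → ℕ}
    (hα : α ∈ M) : Dk M U k α ⊆ U α := by
  intro y hy
  simp only [Dk, Set.mem_iInter, Set.mem_setOf_eq] at hy
  exact hy α ⟨hα, fun _ _ => rfl⟩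

lemma part2 (x : X) (M : Set (ℕ → ℕ)) (U : (ℕ → ℕ) → Set X)
    (hsb : IsSmallBaseAt M U x) (hD : CondD M U) :
    ({D | ∃ α ∈ M, ∃ k : ℕ, D = Dk M U k α} : Set (Set X)).Countable ∧
      IsCnNetworkAt {D | ∃ α ∈ M, ∃ k : ℕ, D = Dk M U k α} x := by
  constructor
  · -- countability: the set is contained in the range of a map from lists
    have hsub : {D | ∃ α ∈ M, ∃ k : ℕ, D = Dk M U k α} ⊆
        Set.range (fun l : List ℕ => Dk M U l.length (fun i => l.getD i 0)) := by
      rintro D ⟨α, hα, k, rfl⟩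
      refine ⟨List.ofFn (fun i : Fin k => α i), ?_⟩
      simp only [List.length_ofFn]
      refine Dk_congr M U k fun i hi => ?_
      rw [List.getD_eq_getElem _ _ (by simpa using hi), List.getElem_ofFn]
    exact (Set.countable_range _).mono hsub
  · -- cn-network
    intro O hO
    obtain ⟨α, hα, hαO⟩ := hsb.2.2 O hO
    have hUα : U α ∈ nhds x := hsb.2.1 α hα
    have hxU : x ∈ U α := mem_of_mem_nhds hUα
    have hx' : x ∈ ⋃ k : ℕ, Dk M U k α := by rw [← hD α hα]; exact hxU
    obtain ⟨k0, hk0⟩ := Set.mem_iUnion.1 hx'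
    refine Filter.mem_of_superset hUα ?_
    intro y hy
    have hy' : y ∈ ⋃ k : ℕ, Dk M U k α := by rw [← hD α hα]; exact hy
    obtain ⟨k1, hk1⟩ := Set.mem_iUnion.1 hy'
    refine ⟨Dk M U (max k0 k1) α, ⟨⟨α, hα, max k0 k1, rfl⟩,
      Dk_mono M U (le_max_left _ _) α hk0,
      (Dk_subset M U _ hα).trans hαO⟩, Dk_mono M U (le_max_right _ _) α hk1⟩

end Aux

theorem statement2 {X : Type*} [TopologicalSpace X] (x : X) :
    ((∃ N : Set (Set X), N.Countable ∧ IsCnNetworkAt N x) ↔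
      ∃ (M : Set (ℕ → ℕ)) (U : (ℕ → ℕ) → Set X), IsSmallBaseAt M U x ∧ CondD M U) ∧
    (∀ (M : Set (ℕ → ℕ)) (U : (ℕ → ℕ) → Set X), IsSmallBaseAt M U x → CondD M U →
      ({D | ∃ α ∈ M, ∃ k : ℕ, D = Dk M U k α} : Set (Set X)).Countable ∧
      IsCnNetworkAt {D | ∃ α ∈ M, ∃ k : ℕ, D = Dk M U k α} x) := by
  classical
  refine ⟨⟨?_, ?_⟩, fun M U hsb hD => part2 x M U hsb hD⟩
  · rintro ⟨N, hNc, hN⟩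
    -- N is nonempty
    have hne : N.Nonempty := by
      have h1 := hN Set.univ Filter.univ_mem
      have hx := mem_of_mem_nhds h1
      obtain ⟨n, ⟨hn, -, -⟩, -⟩ := hx
      exact ⟨n, hn⟩
    obtain ⟨e, he⟩ := Set.Countable.exists_eq_range hNc hne
    set U : (ℕ → ℕ) → Set X := fun α => ⋃ i ∈ {i : ℕ | α i = 0 ∧ x ∈ e i}, e i with hUdef
    have hanti : ∀ α β : ℕ → ℕ, α ≤ β → U β ⊆ U α := by
      intro α β hle y hy
      simp only [hUdef, Set.mem_iUnion, Set.mem_setOf_eq] at hy ⊢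
      obtain ⟨i, ⟨hβi, hxi⟩, hyi⟩ := hy
      exact ⟨i, ⟨Nat.le_zero.mp (hβi ▸ hle i), hxi⟩, hyi⟩
    refine ⟨{α | U α ∈ nhds x}, U, ⟨fun α _ β _ h => hanti α β h,
      fun α hα => hα, ?_⟩, ?_⟩
    · -- base property
      intro O hO
      set α : ℕ → ℕ := fun i => if x ∈ e i ∧ e i ⊆ O then 0 else 1 with hαdef
      have hkey : ⋃₀ {n | n ∈ N ∧ x ∈ n ∧ n ⊆ O} ⊆ U α := by
        rintro y ⟨n, ⟨hnN, hxn, hnO⟩, hyn⟩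
        rw [he] at hnN
        obtain ⟨i, rfl⟩ := hnN
        simp only [hUdef, Set.mem_iUnion, Set.mem_setOf_eq]
        exact ⟨i, ⟨by simp [hαdef, hxn, hnO], hxn⟩, hyn⟩
      have hsubO : U α ⊆ O := by
        intro y hy
        simp only [hUdef, Set.mem_iUnion, Set.mem_setOf_eq] at hy
        obtain ⟨i, ⟨hαi, hxi⟩, hyi⟩ := hy
        have : x ∈ e i ∧ e i ⊆ O := by
          by_contra hc
          simp [hαdef, hc] at hαi
        exact this.2 hyi
      exact ⟨α, Filter.mem_of_superset (hN O hO) hkey, hsubO⟩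
    · -- condition (D)
      intro α hα
      refine Set.Subset.antisymm ?_ ?_
      · intro y hy
        simp only [hUdef, Set.mem_iUnion, Set.mem_setOf_eq] at hy
        obtain ⟨i, ⟨hαi, hxi⟩, hyi⟩ := hy
        refine Set.mem_iUnion.2 ⟨i + 1, ?_⟩
        simp only [Dk, Set.mem_iInter, Set.mem_setOf_eq]
        rintro β ⟨-, hβeq⟩
        simp only [hUdef, Set.mem_iUnion, Set.mem_setOf_eq]
        exact ⟨i, ⟨(hβeq i (Nat.lt_succ_self i)).trans hαi, hxi⟩, hyi⟩
      · exact Set.iUnion_subset fun k => Dk_subset _ _ k hα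
  · rintro ⟨M, U, hsb, hD⟩
    obtain ⟨hc, hcn⟩ := part2 x M U hsb hD
    exact ⟨_, hc, hcn⟩
end

section
/- A Baire topological group G is metrizable if and only if G has a countable cn-network at the identity. -/
open Filter Set Topology Pointwise Bornology

theorem statement3 {G : Type*} [Group G] [TopologicalSpace G] [IsTopologicalGroup G]
    [T2Space G] [BaireSpace G] :
    TopologicalSpace.MetrizableSpace G ↔
      ∃ N : Set (Set G), N.Countable ∧ IsCnNetworkAt N (1 : G) := by
  constructor
  · intro hm
    letI := TopologicalSpace.metrizableSpaceMetric G
    obtain ⟨b, hb⟩ := (𝓝 (1 : G)).exists_antitone_basis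
    refine ⟨Set.range b, Set.countable_range b, fun O hO => ?_⟩
    obtain ⟨i, hi⟩ := hb.mem_iff.mp hO
    refine Filter.mem_of_superset (hb.mem i) fun x hx => ?_
    exact ⟨b i, ⟨⟨i, rfl⟩, mem_of_mem_nhds (hb.mem i), hi⟩, hx⟩
  · rintro ⟨N, hNc, hcn⟩
    -- It suffices to show the neighborhood filter at 1 is countably generated.
    have hcg : (𝓝 (1 : G)).IsCountablyGenerated := by
      set B : Set G → Set G :=
        fun n => interior (closure n) * (interior (closure n))⁻¹ with hB
      have key : ∀ O ∈ 𝓝 (1 : G), ∃ n ∈ N, B n ∈ 𝓝 (1 : G) ∧ B n ⊆ O := by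
        intro O hO
        obtain ⟨V, hV, hVcl, hVsymm, hVmul⟩ := exists_closed_nhds_one_inv_eq_mul_subset hO
        set S : Set (Set G) := {n | n ∈ N ∧ (1 : G) ∈ n ∧ n ⊆ V} with hS
        have hWn : ⋃₀ S ∈ 𝓝 (1 : G) := hcn V hV
        have hSc : S.Countable := hNc.mono fun n hn => hn.1
        -- Some member of S is not nowhere dense, by Baireness.
        have : ∃ n ∈ S, ¬ IsNowhereDense n := by
          by_contra h
          push_neg at h
          have hmeag : IsMeagre (⋃₀ S) :=
            (isMeagre_iff_countable_union_isNowhereDense).mpr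
              ⟨S, h, hSc, subset_rfl⟩
          have hd : Dense (⋃₀ S)ᶜ := dense_of_mem_residual hmeag
          have : interior (⋃₀ S) = ∅ := interior_eq_empty_iff_dense_compl.mpr hd
          have h1 : (1 : G) ∈ interior (⋃₀ S) := mem_interior_iff_mem_nhds.mpr hWn
          simp [this] at h1
        obtain ⟨n, ⟨hnN, -, hnV⟩, hnd⟩ := this
        have hUne : (interior (closure n)).Nonempty :=
          Set.nonempty_iff_ne_empty.mpr hnd
        obtain ⟨x, hx⟩ := hUne
        have hUopen : IsOpen (B n) := isOpen_interior.mul_right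
        have h1B : (1 : G) ∈ B n := by
          have : x * x⁻¹ ∈ B n := Set.mul_mem_mul hx (Set.inv_mem_inv.mpr hx)
          simpa using this
        have hsub : B n ⊆ O := by
          have hclV : closure n ⊆ V := closure_minimal hnV hVcl
          have hUV : interior (closure n) ⊆ V := interior_subset.trans hclV
          calc B n ⊆ V * V⁻¹ := Set.mul_subset_mul hUV (Set.inv_subset_inv.mpr hUV)
            _ = V * V := by rw [hVsymm]
            _ ⊆ O := hVmul
        exact ⟨n, hnN, hUopen.mem_nhds h1B, hsub⟩
      have hbasis : (𝓝 (1 : G)).HasCountableBasis (fun t => t ∈ B '' N ∧ t ∈ 𝓝 (1 : G)) id := by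
        constructor
        · constructor
          intro O
          constructor
          · intro hO
            obtain ⟨n, hnN, h1, h2⟩ := key O hO
            exact ⟨B n, ⟨⟨n, hnN, rfl⟩, h1⟩, h2⟩
          · rintro ⟨t, ⟨-, ht⟩, htO⟩
            exact Filter.mem_of_superset ht htO
        · exact (hNc.image B).mono (fun t ht => ht.1)
      exact hbasis.isCountablyGenerated
    letI : UniformSpace G := IsTopologicalGroup.rightUniformSpace G
    have : Filter.IsCountablyGenerated (uniformity G) := by
      rw [uniformity_eq_comap_nhds_one']
      exact Filter.comap.isCountablyGenerated _ _
    exact UniformSpace.metrizableSpace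
end

section
/- A Baire topological group G with the strong Pytkeev property is metrizable. -/
open Filter Set Topology Pointwise Bornology

theorem statement4 {G : Type*} [Group G] [TopologicalSpace G] [IsTopologicalGroup G]
    [T2Space G] [BaireSpace G] (h : HasStrongPytkeev G) :
    TopologicalSpace.MetrizableSpace G := by
  obtain ⟨𝒟, h𝒟c, h𝒟⟩ := h 1
  have key : (𝓝 (1 : G)).IsCountablyGenerated := by
    by_cases hiso : (𝓝[≠] (1 : G)).NeBot
    · haveI := hiso
      -- `C` : union of closures of nowhere dense members of `𝒟`
      set C : Set G := ⋃₀ ((fun d => closure d) '' {d ∈ 𝒟 | IsNowhereDense d}) with hCdef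
      have hCm : IsMeagre C := by
        rw [isMeagre_iff_countable_union_isNowhereDense]
        refine ⟨(fun d => closure d) '' {d ∈ 𝒟 | IsNowhereDense d}, ?_,
          (h𝒟c.mono (Set.sep_subset _ _)).image _, subset_rfl⟩
        rintro t ⟨d, hd, rfl⟩
        exact hd.2.closure
      have hdense : Dense Cᶜ := dense_of_mem_residual hCm
      set A : Set G := Cᶜ \ {1} with hAdef
      have hAdense : Dense A := hdense.diff_singleton 1
      have hA1 : (1 : G) ∈ closure A \ A := ⟨hAdense 1, fun hx => hx.2 rfl⟩
      have claim : ∀ U ∈ 𝓝 (1 : G), ∃ d ∈ 𝒟, d ⊆ U ∧ (interior (closure d)).Nonempty := by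
        intro U hU
        obtain ⟨d, hdD, hdU, hinf⟩ := h𝒟 U hU A hA1
        refine ⟨d, hdD, hdU, ?_⟩
        by_contra hne
        rw [Set.not_nonempty_iff_eq_empty] at hne
        obtain ⟨x, hxd, hxA⟩ := hinf.nonempty
        exact hxA.1 ⟨closure d, ⟨d, ⟨hdD, hne⟩, rfl⟩, subset_closure hxd⟩
      haveI : Countable ↥𝒟 := h𝒟c.to_subtype
      have hbasis : (𝓝 (1 : G)).HasBasis
          (fun d : 𝒟 => (interior (closure (d : Set G))).Nonempty)
          (fun d : 𝒟 => (interior (closure (d : Set G)))⁻¹ * interior (closure (d : Set G))) := by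
        constructor
        intro t
        constructor
        · intro ht
          obtain ⟨V₁, hV₁o, hV₁1, hV₁⟩ := exists_open_nhds_one_mul_subset ht
          obtain ⟨V₂, hV₂o, hV₂1, hV₂⟩ :=
            exists_open_nhds_one_mul_subset (hV₁o.mem_nhds hV₁1)
          set V : Set G := V₂ ∩ V₂⁻¹ with hVdef
          have hVo : IsOpen V := hV₂o.inter hV₂o.inv
          have hV1 : (1 : G) ∈ V := ⟨hV₂1, by simpa using hV₂1⟩
          have hVinv : ∀ v ∈ V, v⁻¹ ∈ V := by
            rintro v ⟨hv₁, hv₂⟩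
            exact ⟨hv₂, by simpa using hv₁⟩
          have hVsub : V ⊆ V₂ := Set.inter_subset_left
          obtain ⟨d, hdD, hdV, hne⟩ := claim V (hVo.mem_nhds hV1)
          refine ⟨⟨d, hdD⟩, hne, ?_⟩
          -- `closure d ⊆ V * V`
          have hclV : closure d ⊆ V * V := by
            refine (closure_mono hdV).trans ?_
            intro x hx
            have hxV : (x • V ∩ V).Nonempty := by
              have : x • V ∈ 𝓝 x := by
                refine (hVo.smul x).mem_nhds ?_
                exact ⟨1, hV1, by simp⟩
              rcases mem_closure_iff_nhds.1 hx _ this with ⟨y, hy₁, hy₂⟩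
              exact ⟨y, hy₁, hy₂⟩
            obtain ⟨y, ⟨u, hu, hyu⟩, hyV⟩ := hxV
            have : x = y * u⁻¹ := by
              simp only [← hyu, smul_eq_mul, mul_inv_cancel_right]
            rw [this]
            exact Set.mul_mem_mul hyV (hVinv u hu)
          have hS : interior (closure d) ⊆ V * V := interior_subset.trans hclV
          intro g hg
          rw [Set.mem_mul] at hg
          obtain ⟨x, hx, y, hy, rfl⟩ := hg
          have hxS : x⁻¹ ∈ V * V := hS (Set.mem_inv.mp hx)
          have hyS : y ∈ V * V := hS hy
          rw [Set.mem_mul] at hxS hyS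
          obtain ⟨v₁, hv₁, v₂, hv₂, hveq⟩ := hxS
          obtain ⟨v₃, hv₃, v₄, hv₄, rfl⟩ := hyS
          have hxe : x = v₂⁻¹ * v₁⁻¹ := by
            have : x = (v₁ * v₂)⁻¹ := by rw [hveq, inv_inv]
            rw [this, mul_inv_rev]
          rw [hxe]
          refine hV₁ (Set.mul_mem_mul (hV₂ (Set.mul_mem_mul ?_ ?_))
            (hV₂ (Set.mul_mem_mul (hVsub hv₃) (hVsub hv₄))))
          · exact hVsub (hVinv _ hv₂)
          · exact hVsub (hVinv _ hv₁)
        · rintro ⟨⟨d, hdD⟩, hne, hsub⟩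
          obtain ⟨x, hx⟩ := hne
          refine Filter.mem_of_superset ?_ hsub
          have hopen : IsOpen (x⁻¹ • interior (closure d)) := isOpen_interior.smul x⁻¹
          have h1 : (1 : G) ∈ x⁻¹ • interior (closure d) := ⟨x, hx, by simp⟩
          refine Filter.mem_of_superset (hopen.mem_nhds h1) ?_
          rintro z ⟨y, hy, rfl⟩
          exact Set.mul_mem_mul (Set.mem_inv.mpr (by simpa using hx)) hy
      exact hbasis.isCountablyGenerated
    · rw [not_neBot, ← isOpen_singleton_iff_punctured_nhds,
        isOpen_singleton_iff_nhds_eq_pure] at hiso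
      rw [hiso, ← Filter.principal_singleton]
      exact Filter.isCountablyGenerated_principal _
  letI u : UniformSpace G := IsTopologicalGroup.rightUniformSpace G
  haveI : (uniformity G).IsCountablyGenerated := by
    haveI := key
    exact Filter.comap.isCountablyGenerated _ _
  exact UniformSpace.metrizableSpace
end

section
/- If a topological group G has a G-base {U_α : α ∈ ℕ^ℕ} of neighborhoods of the identity satisfying condition (D), and G is a Baire space, then G is metrizable. -/
open Filter Set Topology Pointwise Bornology

section Aux
variable {G : Type*} [TopologicalSpace G]

private lemma isMeagre_of_isNowhereDense {s : Set G} (h : IsNowhereDense s) : IsMeagre s := by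
  rw [isMeagre_iff_countable_union_isNowhereDense]
  exact ⟨{closure s}, by simpa using h.closure, countable_singleton _, by simpa using subset_closure⟩

private lemma not_isMeagre_of_mem_nhds [BaireSpace G] {x : G} {O : Set G} (h : O ∈ nhds x) :
    ¬ IsMeagre O := by
  intro hm
  have hx : x ∈ interior O := mem_interior_iff_mem_nhds.2 h
  have hd : Dense Oᶜ := dense_of_mem_residual hm
  rcases hd.inter_open_nonempty (interior O) isOpen_interior ⟨x, hx⟩ with ⟨y, hy1, hy2⟩
  exact hy2 (interior_subset hy1)

end Aux

section Grp
variable {G : Type*} [Group G] [TopologicalSpace G] [IsTopologicalGroup G]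

private lemma closure_mul_inv_mem_nhds {A : Set G} (h : ¬ IsMeagre A) :
    closure (A * A⁻¹) ∈ nhds (1 : G) := by
  have hne : (interior (closure A)).Nonempty := by
    rcases eq_empty_or_nonempty (interior (closure A)) with he | hne
    · exact absurd (isMeagre_of_isNowhereDense he) h
    · exact hne
  obtain ⟨x, hx⟩ := hne
  have hsub : interior (closure A) * (interior (closure A))⁻¹ ⊆ closure (A * A⁻¹) := by
    rintro z ⟨a, ha, b, hb, rfl⟩
    have ha' : a ∈ closure A := interior_subset ha
    have hb' : b ∈ closure A⁻¹ := by
      rw [← inv_closure]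
      exact Set.mem_inv.2 (interior_subset (Set.mem_inv.1 hb))
    exact map_mem_closure₂ continuous_mul ha' hb' (fun p hp q hq => Set.mul_mem_mul hp hq)
  have hopen : IsOpen (interior (closure A) * (interior (closure A))⁻¹) :=
    isOpen_interior.mul_right
  have h1 : (1 : G) ∈ interior (closure A) * (interior (closure A))⁻¹ :=
    ⟨x, hx, x⁻¹, Set.inv_mem_inv.2 hx, mul_inv_cancel x⟩
  exact Filter.mem_of_superset (hopen.mem_nhds h1) hsub

private lemma closure_subset_mul' {S V : Set G} (hV : V ∈ nhds (1 : G)) :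
    closure S ⊆ S * V := by
  intro x hx
  have hnb : x • V⁻¹ ∈ nhds x := by
    have := smul_mem_nhds_smul x (inv_mem_nhds_one G hV)
    simpa using this
  rcases mem_closure_iff_nhds.1 hx _ hnb with ⟨s, hs1, hs2⟩
  have : x⁻¹ * s ∈ V⁻¹ := by
    have := mem_smul_set_iff_inv_smul_mem.1 hs1
    simpa using this
  have hv : s⁻¹ * x ∈ V := by
    have := Set.inv_mem_inv.1 (by simpa using this)
    simpa [mul_inv_rev] using this
  exact ⟨s, hs2, s⁻¹ * x, hv, by group⟩

end Grp

theorem statement5 {G : Type*} [Group G] [TopologicalSpace G] [IsTopologicalGroup G]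
    [T2Space G] [BaireSpace G] (U : (ℕ → ℕ) → Set G)
    (hU : IsSmallBaseAt Set.univ U (1 : G)) (hD : CondD Set.univ U) :
    TopologicalSpace.MetrizableSpace G := by
  obtain ⟨hmono, hnhds, hbase⟩ := hU
  set D : List ℕ → Set G := fun l => Dk Set.univ U l.length (fun i => l.getD i 0) with hDdef
  have key : ∀ O ∈ nhds (1:G), ∃ l : List ℕ,
      closure (D l * (D l)⁻¹) ∈ nhds (1:G) ∧ closure (D l * (D l)⁻¹) ⊆ O := by
    intro O hO
    obtain ⟨W, hW, hWO⟩ := exists_nhds_one_split hO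
    obtain ⟨V, hV, hVW⟩ := exists_nhds_one_split hW
    set V' : Set G := V ∩ W ∩ (V ∩ W)⁻¹ with hV'def
    have hV'nhds : V' ∈ nhds (1:G) := by
      apply Filter.inter_mem (Filter.inter_mem hV hW)
      exact inv_mem_nhds_one G (Filter.inter_mem hV hW)
    obtain ⟨γ, -, hγ⟩ := hbase V' hV'nhds
    -- some Dk is nonmeagre
    have hUγ : U γ ∈ nhds (1:G) := hnhds γ (Set.mem_univ γ)
    have hkey : ∃ k, ¬ IsMeagre (Dk Set.univ U k γ) := by
      by_contra h
      push_neg at h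
      have : IsMeagre (U γ) := by
        rw [hD γ (Set.mem_univ γ)]
        exact isMeagre_iUnion (by simpa using h)
      exact not_isMeagre_of_mem_nhds hUγ this
    obtain ⟨k, hk⟩ := hkey
    have hg : ∀ i, i < k → (List.ofFn fun j : Fin k => γ j).getD i 0 = γ i := by
      intro i hi
      rw [List.getD_eq_getElem _ _ (by simpa using hi)]
      simp
    have hset : {β ∈ (Set.univ : Set (ℕ → ℕ)) |
          ∀ i < (List.ofFn fun j : Fin k => γ j).length,
            β i = (List.ofFn fun j : Fin k => γ j).getD i 0}
        = {β ∈ (Set.univ : Set (ℕ → ℕ)) | ∀ i < k, β i = γ i} := by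
      ext β
      simp only [Set.mem_setOf_eq, Set.mem_univ, true_and, List.length_ofFn]
      exact forall₂_congr fun i hi => by rw [hg i hi]
    set l : List ℕ := List.ofFn (fun i : Fin k => γ i) with hldef
    have hDl : D l = Dk Set.univ U k γ := by
      rw [hDdef]
      show Dk Set.univ U l.length (fun i => l.getD i 0) = Dk Set.univ U k γ
      unfold Dk
      rw [hset]
    have hsubU : Dk Set.univ U k γ ⊆ U γ := by
      intro x hx
      exact Set.mem_iInter₂.1 hx γ ⟨Set.mem_univ γ, fun i _ => rfl⟩
    refine ⟨l, ?_, ?_⟩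
    · rw [hDl]; exact closure_mul_inv_mem_nhds hk
    · rw [hDl]
      have h1 : Dk Set.univ U k γ * (Dk Set.univ U k γ)⁻¹ ⊆ U γ * (U γ)⁻¹ :=
        Set.mul_subset_mul hsubU (Set.inv_subset_inv.2 hsubU)
      have h2 : closure (U γ * (U γ)⁻¹) ⊆ (U γ * (U γ)⁻¹) * V' :=
        closure_subset_mul' hV'nhds
      refine (closure_mono h1).trans (h2.trans ?_)
      rintro z ⟨y, ⟨a, ha, b, hb, rfl⟩, c, hc, rfl⟩
      have haV : a ∈ V := ((hγ ha).1).1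
      have hbV : b ∈ V := by
        have h1 : b⁻¹ ∈ V' := hγ (Set.mem_inv.1 hb)
        have h2 : b ∈ V ∩ W := by simpa using h1.2
        exact h2.1
      have hcW : c ∈ W := (hc.1).2
      exact hWO _ (hVW _ haV _ hbV) _ hcW
  have hbasis : (nhds (1:G)).HasBasis
      (fun l : List ℕ => closure (D l * (D l)⁻¹) ∈ nhds (1:G))
      (fun l => closure (D l * (D l)⁻¹)) := by
    constructor
    intro t
    constructor
    · intro ht
      obtain ⟨l, h1, h2⟩ := key t ht
      exact ⟨l, h1, h2⟩
    · rintro ⟨l, h1, h2⟩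
      exact Filter.mem_of_superset h1 h2
  haveI : (nhds (1:G)).IsCountablyGenerated := hbasis.isCountablyGenerated
  letI : UniformSpace G := IsTopologicalGroup.rightUniformSpace G
  haveI : (uniformity G).IsCountablyGenerated := by
    rw [uniformity_eq_comap_nhds_one' G]
    exact Filter.comap.isCountablyGenerated _ _
  exact UniformSpace.metrizableSpace
end

section
/- In the Banach space ℓ¹, let M₀ := ℕ^ℕ ∩ ℓ^∞ (bounded sequences of positive integers) and for α ∈ M₀ define U_α := { x ∈ ℓ¹ : Σ_i α_i |x_i| < 1 }. Then {U_α : α ∈ M₀} is an M₀-decreasing neighborhood base at 0, but condition (D) fails: for each α ∈ M₀ and k ∈ ℕ, D_k(α) = { x ∈ ℓ¹ : Σ_{i≤k} α_i|x_i| < 1 and x_i = 0 for i > k }, and ⋃_k D_k(α) ≠ U_α. -/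
open Filter Set Topology Pointwise Bornology

local instance : Fact ((1 : ENNReal) ≤ 1) := ⟨le_rfl⟩

/-- The index set `M₀ = ℕ^ℕ ∩ ℓ^∞`: bounded sequences of positive integers. -/
def M0 : Set (ℕ → ℕ) := {α | (∀ i, 1 ≤ α i) ∧ ∃ C, ∀ i, α i ≤ C}

/-- The sets `U_α = {x ∈ ℓ¹ : ∑ᵢ αᵢ |xᵢ| < 1}`. -/
def Ul1 (α : ℕ → ℕ) : Set (lp (fun _ : ℕ => ℝ) 1) :=
  {x | ∑' i, (α i : ℝ) * |x i| < 1}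

lemma summable_abs' (x : lp (fun _ : ℕ => ℝ) 1) : Summable fun i => |x i| := by
  have h := (lp.memℓp x).summable (by norm_num : 0 < (1 : ENNReal).toReal)
  simpa [Real.norm_eq_abs] using h

lemma norm_eq' (x : lp (fun _ : ℕ => ℝ) 1) : ‖x‖ = ∑' i, |x i| := by
  have := lp.norm_eq_tsum_rpow (by norm_num : 0 < (1 : ENNReal).toReal) x
  simpa [Real.norm_eq_abs] using this

lemma summable_mul' {α : ℕ → ℕ} {C : ℕ} (hC : ∀ i, α i ≤ C)
    (x : lp (fun _ : ℕ => ℝ) 1) : Summable fun i => (α i : ℝ) * |x i| := by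
  refine Summable.of_nonneg_of_le (fun i => by positivity)
    (fun i => ?_) ((summable_abs' x).mul_left (C : ℝ))
  exact mul_le_mul_of_nonneg_right (by exact_mod_cast hC i) (abs_nonneg _)

theorem statement7 :
    IsSmallBaseAt M0 Ul1 (0 : lp (fun _ : ℕ => ℝ) 1) ∧
    (∀ α ∈ M0, ∀ k : ℕ,
      Dk M0 Ul1 k α = {x : lp (fun _ : ℕ => ℝ) 1 |
        (∑ i ∈ Finset.range k, (α i : ℝ) * |x i|) < 1 ∧ ∀ i, k ≤ i → x i = 0}) ∧
    (∀ α ∈ M0, (⋃ k : ℕ, Dk M0 Ul1 k α) ≠ Ul1 α) := by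
  have part2 : ∀ α ∈ M0, ∀ k : ℕ,
      Dk M0 Ul1 k α = {x : lp (fun _ : ℕ => ℝ) 1 |
        (∑ i ∈ Finset.range k, (α i : ℝ) * |x i|) < 1 ∧ ∀ i, k ≤ i → x i = 0} := by
    rintro α ⟨hα1, C, hC⟩ k
    ext x
    simp only [Dk, Set.mem_iInter, Set.mem_setOf_eq, Set.mem_sep_iff]
    constructor
    · intro h
      have hself : ∑' i, (α i : ℝ) * |x i| < 1 := h α ⟨⟨hα1, C, hC⟩, fun i _ => rfl⟩
      have hzero : ∀ i, k ≤ i → x i = 0 := by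
        intro j hj
        by_contra hxj
        have hpos : 0 < |x j| := abs_pos.mpr hxj
        set N : ℕ := ⌈1 / |x j|⌉₊ + 1 with hN
        set β : ℕ → ℕ := fun i => if i < k then α i else α i + N with hβ
        have hβC : ∀ i, β i ≤ C + N := by
          intro i; by_cases h' : i < k <;> simp [hβ, h'] <;> [exact le_trans (hC i) (Nat.le_add_right _ _); exact hC i]
        have hβM : β ∈ M0 := by
          refine ⟨fun i => ?_, C + N, hβC⟩
          by_cases h' : i < k <;> simp [hβ, h']
          · exact hα1 i
          · exact le_trans (hα1 i) (Nat.le_add_right _ _)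
        have hmem : ∑' i, (β i : ℝ) * |x i| < 1 :=
          h β ⟨hβM, fun i hik => by simp [hβ, hik]⟩
        have hterm : (1 : ℝ) ≤ (β j : ℝ) * |x j| := by
          have h1 : (1 : ℝ) / |x j| ≤ N := by
            have := Nat.le_ceil (1 / |x j|)
            have h2 : ((⌈1 / |x j|⌉₊ : ℝ)) ≤ N := by rw [hN]; push_cast; linarith
            linarith
          have h3 : (N : ℝ) ≤ β j := by
            have : β j = α j + N := by simp [hβ, Nat.not_lt.mpr hj]
            rw [this]; push_cast; have hnn : (0:ℝ) ≤ (α j : ℝ) := Nat.cast_nonneg _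
            linarith
          calc (1 : ℝ) = (1 / |x j|) * |x j| := by field_simp
            _ ≤ (N : ℝ) * |x j| := mul_le_mul_of_nonneg_right h1 (abs_nonneg _)
            _ ≤ (β j : ℝ) * |x j| := mul_le_mul_of_nonneg_right h3 (abs_nonneg _)
        have hle : (β j : ℝ) * |x j| ≤ ∑' i, (β i : ℝ) * |x i| :=
          Summable.le_tsum (summable_mul' hβC x) j (fun i _ => by positivity)
        linarith
      refine ⟨lt_of_le_of_lt ?_ hself, hzero⟩
      exact Summable.sum_le_tsum _ (fun i _ => by positivity) (summable_mul' hC x)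
    · rintro ⟨h1, h2⟩ β ⟨⟨hβ1, D, hD⟩, hβeq⟩
      have : ∑' i, (β i : ℝ) * |x i| = ∑ i ∈ Finset.range k, (β i : ℝ) * |x i| := by
        refine tsum_eq_sum ?_
        intro i hi
        rw [h2 i (by simpa using hi)]
        simp
      show ∑' i, (β i : ℝ) * |x i| < 1
      rw [this]
      calc ∑ i ∈ Finset.range k, (β i : ℝ) * |x i|
          = ∑ i ∈ Finset.range k, (α i : ℝ) * |x i| := by
            refine Finset.sum_congr rfl fun i hi => by rw [hβeq i (Finset.mem_range.mp hi)]
        _ < 1 := h1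
  refine ⟨⟨?_, ?_, ?_⟩, part2, ?_⟩
  · -- monotone
    rintro α ⟨hα1, C, hC⟩ β ⟨hβ1, D, hD⟩ hle x hx
    have : ∑' i, (α i : ℝ) * |x i| ≤ ∑' i, (β i : ℝ) * |x i| := by
      refine Summable.tsum_le_tsum (fun i => ?_) (summable_mul' hC x) (summable_mul' hD x)
      exact mul_le_mul_of_nonneg_right (by exact_mod_cast hle i) (abs_nonneg _)
    exact lt_of_le_of_lt this hx
  · -- nhds
    rintro α ⟨hα1, C, hC⟩
    have hCpos : (0 : ℝ) < C := by
      have := le_trans (hα1 0) (hC 0); exact_mod_cast Nat.lt_of_lt_of_le Nat.zero_lt_one this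
    rw [Metric.mem_nhds_iff]
    refine ⟨1 / C, by positivity, fun x hx => ?_⟩
    rw [Metric.mem_ball, dist_zero_right] at hx
    show ∑' i, (α i : ℝ) * |x i| < 1
    have h1 : ∑' i, (α i : ℝ) * |x i| ≤ (C : ℝ) * ∑' i, |x i| := by
      rw [← tsum_mul_left]
      refine Summable.tsum_le_tsum (fun i => ?_) (summable_mul' hC x) ((summable_abs' x).mul_left _)
      exact mul_le_mul_of_nonneg_right (by exact_mod_cast hC i) (abs_nonneg _)
    have h2 : (C : ℝ) * ∑' i, |x i| < 1 := by
      rw [← norm_eq']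
      calc (C : ℝ) * ‖x‖ < C * (1 / C) := by exact mul_lt_mul_of_pos_left hx hCpos
        _ = 1 := by field_simp
    linarith
  · -- base
    intro O hO
    rw [Metric.mem_nhds_iff] at hO
    obtain ⟨ε, hε, hball⟩ := hO
    obtain ⟨n, hn⟩ := exists_nat_one_div_lt hε
    refine ⟨fun _ => n + 1, ⟨fun i => Nat.succ_le_succ (Nat.zero_le n), n + 1, fun i => le_rfl⟩,
      fun x hx => ?_⟩
    apply hball
    rw [Metric.mem_ball, dist_zero_right]
    have hx' : ∑' i, ((n + 1 : ℕ) : ℝ) * |x i| < 1 := hx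
    rw [tsum_mul_left, ← norm_eq'] at hx'
    have hn1 : (0 : ℝ) < ((n + 1 : ℕ) : ℝ) := by positivity
    have : ‖x‖ < 1 / ((n + 1 : ℕ) : ℝ) := by
      rw [lt_div_iff₀ hn1]; linarith [hx']
    calc ‖x‖ < 1 / ((n + 1 : ℕ) : ℝ) := this
      _ = 1 / ((n : ℝ) + 1) := by push_cast; ring_nf
      _ < ε := hn
  · -- part 3
    rintro α hα h
    obtain ⟨hα1, C, hC⟩ := hα
    have hCpos : (0 : ℝ) < C := by
      have := le_trans (hα1 0) (hC 0); exact_mod_cast Nat.lt_of_lt_of_le Nat.zero_lt_one this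
    set f : ℕ → ℝ := fun i => (1 / (4 * C)) * (1 / 2) ^ i with hf
    have hfpos : ∀ i, 0 < f i := fun i => by positivity
    have hs : Summable f := (summable_geometric_of_lt_one (by norm_num) (by norm_num)).mul_left _
    have hmem : Memℓp f 1 := by
      apply memℓp_gen
      have : (fun i => ‖f i‖ ^ (1 : ENNReal).toReal) = f := by
        funext i
        simp [Real.norm_eq_abs, abs_of_pos (hfpos i)]
      rw [this]; exact hs
    set x : lp (fun _ : ℕ => ℝ) 1 := ⟨f, hmem⟩ with hx
    have hxi : ∀ i, x i = f i := fun i => rfl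
    have hxU : x ∈ Ul1 α := by
      show ∑' i, (α i : ℝ) * |x i| < 1
      have hle : ∑' i, (α i : ℝ) * |x i| ≤ ∑' i, (C : ℝ) * f i := by
        refine Summable.tsum_le_tsum (fun i => ?_) (summable_mul' hC x) (hs.mul_left _)
        rw [hxi i, abs_of_pos (hfpos i)]
        exact mul_le_mul_of_nonneg_right (by exact_mod_cast hC i) (hfpos i).le
      have hcalc : ∑' i, (C : ℝ) * f i = 1 / 2 := by
        simp only [hf]
        rw [tsum_mul_left, tsum_mul_left, tsum_geometric_of_lt_one (by norm_num) (by norm_num)]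
        field_simp
        ring
      rw [hcalc] at hle
      linarith
    rw [← h] at hxU
    obtain ⟨k, hk⟩ := Set.mem_iUnion.mp hxU
    rw [part2 α ⟨hα1, C, hC⟩ k] at hk
    exact (hfpos k).ne' ((hxi k) ▸ hk.2 k le_rfl)
end

section
/- Any countable cp-network at a point x of a topological space X is a ck-network at x. -/
open Filter Set Topology Pointwise Bornology

theorem statement8 {X : Type*} [TopologicalSpace X] (N : Set (Set X)) (x : X)
    (hc : N.Countable) (h : IsCpNetworkAt N x) : IsCkNetworkAt N x := by
  classical
  obtain ⟨hnet, hcp⟩ := h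
  intro O hO
  have hN'c : {n | n ∈ N ∧ x ∈ n ∧ n ⊆ O}.Countable := hc.mono fun n hn => hn.1
  have hN'ne : {n | n ∈ N ∧ x ∈ n ∧ n ⊆ O}.Nonempty := by
    obtain ⟨n, hn1, hn2, hn3⟩ := hnet O hO
    exact ⟨n, hn1, hn2, hn3⟩
  obtain ⟨f, hf⟩ := hN'c.exists_eq_range hN'ne
  have hfmem : ∀ k, f k ∈ N ∧ x ∈ f k ∧ f k ⊆ O := fun k => by
    have h1 : f k ∈ Set.range f := Set.mem_range_self k
    rw [← hf] at h1
    exact h1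
  set V : ℕ → Set X := fun m => ⋃ (k : ℕ) (_ : k < m), f k with hV
  have hfV : ∀ {k m : ℕ}, k < m → f k ⊆ V m := by
    intro k m hk z hz
    simp only [hV, Set.mem_iUnion]
    exact ⟨k, hk, hz⟩
  have hVmem : ∀ {z : X} {m : ℕ}, z ∈ V m → ∃ k, k < m ∧ z ∈ f k := by
    intro z m hz
    simp only [hV, Set.mem_iUnion] at hz
    obtain ⟨k, hk, hzk⟩ := hz
    exact ⟨k, hk, hzk⟩
  -- cp-consequence, phrased with the enumeration
  have cpO : ∀ A : Set X, x ∈ closure A → x ∉ A → ∀ G ∈ nhds x,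
      ∃ k, f k ⊆ G ∧ (f k ∩ A).Infinite := by
    intro A hcl hna G hG
    obtain ⟨n, hnN, hxn, hnsub, hinf⟩ := hcp A ⟨hcl, hna⟩ (O ∩ G) (Filter.inter_mem hO hG)
    have hmem : n ∈ {n | n ∈ N ∧ x ∈ n ∧ n ⊆ O} :=
      ⟨hnN, hxn, hnsub.trans Set.inter_subset_left⟩
    rw [hf] at hmem
    obtain ⟨k, rfl⟩ := hmem
    exact ⟨k, hnsub.trans Set.inter_subset_right, hinf⟩
  -- no "free" sequence clusters at x
  have free_not_cluster : ∀ u : ℕ → X, (∀ k, {m | u m ∈ f k}.Finite) → (∀ m, u m ≠ x) →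
      ¬ ClusterPt x (Filter.map u Filter.atTop) := by
    intro u hfree hne hclus
    have hxcl : x ∈ closure (Set.range u \ {x}) := by
      rw [mem_closure_iff_nhds]
      intro t ht
      obtain ⟨z, hz1, hz2⟩ := clusterPt_iff_nonempty.mp hclus ht Filter.range_mem_map
      obtain ⟨m, rfl⟩ := hz2
      exact ⟨u m, hz1, Set.mem_range_self m, hne m⟩
    obtain ⟨k, -, hinf⟩ := cpO (Set.range u \ {x}) hxcl (fun hx => hx.2 rfl) O hO
    have hsub : f k ∩ (Set.range u \ {x}) ⊆ u '' {m | u m ∈ f k} := by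
      rintro z ⟨hzf, ⟨m, rfl⟩, -⟩
      exact ⟨m, hzf, rfl⟩
    exact hinf (((hfree k).image u).subset hsub)
  set D : Set X := {p | ∃ u : ℕ → X, (∀ k, {m | u m ∈ f k}.Finite) ∧ (∀ m, u m ≠ x) ∧
      ClusterPt p (Filter.map u Filter.atTop)} with hDdef
  have hxD : x ∉ D := by
    rintro ⟨u, h1, h2, h3⟩
    exact free_not_cluster u h1 h2 h3
  -- key claim: x ∉ closure D
  have hxclD : x ∉ closure D := by
    by_contra hxcl
    have hsel : ∀ k, ∃ (p : X) (u : ℕ → X), (f k ∩ D).Nonempty →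
        p ∈ f k ∧ (∀ j, {m | u m ∈ f j}.Finite) ∧ (∀ m, u m ≠ x) ∧
          ClusterPt p (Filter.map u Filter.atTop) := by
      intro k
      by_cases hk : (f k ∩ D).Nonempty
      · obtain ⟨p, hp1, u, hu1, hu2, hu3⟩ := hk
        exact ⟨p, u, fun _ => ⟨hp1, hu1, hu2, hu3⟩⟩
      · exact ⟨x, fun _ => x, fun hk' => absurd hk' hk⟩
    choose p u hu using hsel
    set B : Set X := ⋃ k, if (f k ∩ D).Nonempty then
        Set.range (u k) \ (V (k+1) ∪ {x}) else ∅ with hBdef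
    have hxB : x ∉ B := by
      intro hx
      obtain ⟨k, hk⟩ := Set.mem_iUnion.mp hx
      by_cases hne : (f k ∩ D).Nonempty
      · rw [if_pos hne] at hk
        exact hk.2 (Or.inr rfl)
      · rw [if_neg hne] at hk
        exact hk
    have hBfin : ∀ j, (f j ∩ B).Finite := by
      intro j
      have hsub : f j ∩ B ⊆ ⋃ (k : ℕ) (_ : k < j),
          (if (f k ∩ D).Nonempty then u k '' {m | u k m ∈ f j} else ∅) := by
        rintro z ⟨hzf, hzB⟩
        obtain ⟨k, hk⟩ := Set.mem_iUnion.mp hzB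
        by_cases hne : (f k ∩ D).Nonempty
        · rw [if_pos hne] at hk
          obtain ⟨⟨m, rfl⟩, hznot⟩ := hk
          have hkj : k < j := by
            by_contra hkj
            push_neg at hkj
            exact hznot (Or.inl (hfV (Nat.lt_succ_of_le hkj) hzf))
          simp only [Set.mem_iUnion]
          exact ⟨k, hkj, by rw [if_pos hne]; exact ⟨m, hzf, rfl⟩⟩
        · rw [if_neg hne] at hk
          exact absurd hk (Set.notMem_empty z)
      refine Set.Finite.subset ?_ hsub
      refine Set.Finite.biUnion (Set.finite_lt_nat j) fun k _ => ?_
      by_cases hne : (f k ∩ D).Nonempty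
      · rw [if_pos hne]
        exact ((hu k hne).2.1 j).image (u k)
      · rw [if_neg hne]
        exact Set.finite_empty
    have hBclx : x ∉ closure B := by
      intro hcl
      obtain ⟨k, -, hinf⟩ := cpO B hcl hxB O hO
      exact hinf (hBfin k)
    obtain ⟨k, hkG, hkinf⟩ := cpO D hxcl hxD (closure B)ᶜ
      (isClosed_closure.isOpen_compl.mem_nhds hBclx)
    have hkne : (f k ∩ D).Nonempty := hkinf.nonempty
    obtain ⟨hpk, hufree, hune, hclus⟩ := hu k hkne
    have hGnp : (closure B)ᶜ ∈ nhds (p k) :=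
      isClosed_closure.isOpen_compl.mem_nhds fun hp => (hkG hpk) hp
    have hT : (u k) ⁻¹' ((V (k+1) ∪ {x})ᶜ) ∈ Filter.atTop := by
      rw [← Nat.cofinite_eq_atTop, Filter.mem_cofinite]
      have heq : ((u k) ⁻¹' ((V (k+1) ∪ {x})ᶜ))ᶜ = (u k) ⁻¹' (V (k+1) ∪ {x}) := by
        rw [← Set.preimage_compl, compl_compl]
      rw [heq]
      have hsub : (u k) ⁻¹' (V (k+1) ∪ {x}) ⊆
          ⋃ (j : ℕ) (_ : j < k+1), {m | u k m ∈ f j} := by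
        intro m hm
        rcases hm with hm | hm
        · obtain ⟨j, hj, hjm⟩ := hVmem hm
          simp only [Set.mem_iUnion]
          exact ⟨j, hj, hjm⟩
        · exact absurd hm (hune m)
      exact (Set.Finite.biUnion (Set.finite_lt_nat (k+1)) fun j _ => hufree j).subset hsub
    obtain ⟨z, hz1, hz2⟩ := clusterPt_iff_nonempty.mp hclus hGnp (Filter.image_mem_map hT)
    obtain ⟨m, hm, rfl⟩ := hz2
    have hmB : u k m ∈ B := by
      refine Set.mem_iUnion.mpr ⟨k, ?_⟩
      rw [if_pos hkne]
      exact ⟨Set.mem_range_self m, hm⟩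
    exact hz1 (subset_closure hmB)
  -- W = ⋃ k, f k is a neighborhood of x
  have hW : (⋃ k, f k) ∈ nhds x := by
    by_contra hWn
    have hxcl : x ∈ closure (⋃ k, f k)ᶜ := by
      rw [mem_closure_iff_nhds]
      intro t ht
      by_contra hemp
      rw [Set.not_nonempty_iff_eq_empty] at hemp
      refine hWn (Filter.mem_of_superset ht fun z hz => ?_)
      by_contra hzW
      have hzmem : z ∈ t ∩ (⋃ k, f k)ᶜ := ⟨hz, hzW⟩
      rw [hemp] at hzmem
      exact hzmem
    obtain ⟨k, -, hinf⟩ := cpO _ hxcl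
      (fun hx => hx (Set.mem_iUnion.mpr ⟨0, (hfmem 0).2.1⟩)) O hO
    obtain ⟨z, hz1, hz2⟩ := hinf.nonempty
    exact hz2 (Set.mem_iUnion.mpr ⟨k, hz1⟩)
  -- the neighborhood U
  refine ⟨(⋃ k, f k) ∩ (closure D)ᶜ,
    Filter.inter_mem hW (isClosed_closure.isOpen_compl.mem_nhds hxclD), ?_⟩
  intro K hKU hK
  have hcov : ∃ m, K ⊆ V m := by
    by_contra hm
    push_neg at hm
    have hpts : ∀ m : ℕ, ∃ z, z ∈ K ∧ z ∉ V (m+1) := by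
      intro m
      obtain ⟨z, hz1, hz2⟩ := Set.not_subset.mp (hm (m+1))
      exact ⟨z, hz1, hz2⟩
    choose y hyK hyV using hpts
    have hle : Filter.map y Filter.atTop ≤ Filter.principal K := by
      rw [Filter.le_principal_iff, Filter.mem_map]
      exact Filter.univ_mem' fun m => hyK m
    obtain ⟨q, hqK, hclq⟩ := hK hle
    have hqD : q ∈ D := by
      refine ⟨y, fun j => (Set.finite_lt_nat j).subset fun m hmf => ?_, fun m hmx => ?_, hclq⟩
      · simp only [Set.mem_setOf_eq] at hmf ⊢
        by_contra hjm
        push_neg at hjm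
        exact hyV m (hfV (Nat.lt_succ_of_le hjm) hmf)
      · exact hyV m (hfV (Nat.succ_pos m) (hmx ▸ (hfmem 0).2.1))
    exact (hKU hqK).2 (subset_closure hqD)
  obtain ⟨m, hm⟩ := hcov
  refine ⟨(Finset.range m).image f, ?_, ?_, ?_, ?_⟩
  · intro n hn
    rw [Finset.coe_image] at hn
    obtain ⟨k, -, rfl⟩ := hn
    exact (hfmem k).1
  · intro g hg
    rw [Finset.mem_image] at hg
    obtain ⟨k, -, rfl⟩ := hg
    exact (hfmem k).2.1
  · intro z hz
    obtain ⟨k, hk, hzk⟩ := hVmem (hm hz)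
    exact ⟨f k, by
      rw [Finset.coe_image]
      exact ⟨k, Finset.mem_coe.mpr (Finset.mem_range.mpr hk), rfl⟩, hzk⟩
  · rintro z ⟨s, hs, hzs⟩
    rw [Finset.coe_image] at hs
    obtain ⟨k, -, rfl⟩ := hs
    exact (hfmem k).2.2 hzs
end

section
/- Every Fréchet–Urysohn topological group G has property (PS): for every sequence (g_n) in G converging to the identity e, there exist strictly increasing sequences (m_k) and (n_k) of natural numbers such that g_{n_k}^{m_k} → e. -/
open Filter Set Topology Pointwise Bornology

section Aux

lemma aux_extract (b : ℕ → ℕ) (hb : Tendsto b atTop atTop) :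
    ∃ ψ : ℕ → ℕ, StrictMono ψ ∧ StrictMono (b ∘ ψ) := by
  have h : ∀ j : ℕ, ∃ i, j < i ∧ b j < b i := by
    intro j
    exact ((eventually_gt_atTop j).and (hb.eventually (eventually_gt_atTop (b j)))).exists
  choose f hf1 hf2 using h
  refine ⟨fun n => f^[n] 0, strictMono_nat_of_lt_succ fun n => ?_,
    strictMono_nat_of_lt_succ fun n => ?_⟩
  · rw [Function.iterate_succ_apply']; exact hf1 _
  · show b (f^[n] 0) < b (f^[n+1] 0)
    rw [Function.iterate_succ_apply']; exact hf2 _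

lemma aux_pack {G : Type*} [Group G] [TopologicalSpace G]
    (g : ℕ → G) (b e : ℕ → ℕ) (hb : Tendsto b atTop atTop) (he : Tendsto e atTop atTop)
    (hv : Tendsto (fun i => g (b i) ^ (e i)) atTop (nhds (1 : G))) :
    ∃ m n : ℕ → ℕ, StrictMono m ∧ StrictMono n ∧
      Tendsto (fun k => g (n k) ^ (m k)) atTop (nhds (1 : G)) := by
  obtain ⟨ψ₁, hψ₁, hbψ₁⟩ := aux_extract b hb
  obtain ⟨ψ₂, hψ₂, heψ₂⟩ := aux_extract (e ∘ ψ₁) (he.comp hψ₁.tendsto_atTop)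
  exact ⟨fun k => e (ψ₁ (ψ₂ k)), fun k => b (ψ₁ (ψ₂ k)), heψ₂, hbψ₁.comp hψ₂,
    hv.comp ((hψ₁.comp hψ₂).tendsto_atTop)⟩

lemma aux_freq {R : ℕ → Prop} {q : ℕ → ℕ} (h : ∀ B, ∃ i, R i ∧ B ≤ q i) :
    ∀ B, ∃ᶠ i in atTop, R i ∧ B ≤ q i := by
  intro B
  rw [Filter.frequently_atTop]
  intro j
  obtain ⟨i, hRi, hqi⟩ := h (max B ((Finset.range j).sup q + 1))
  refine ⟨i, ?_, hRi, le_trans (le_max_left _ _) hqi⟩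
  by_contra hij
  push_neg at hij
  have h1 : q i ≤ (Finset.range j).sup q := Finset.le_sup (Finset.mem_range.mpr hij)
  have h2 : (Finset.range j).sup q + 1 ≤ q i := le_trans (le_max_right _ _) hqi
  omega

lemma aux_pigeon {f : ℕ → ℕ} {B : ℕ} {S : Set ℕ} (hS : S.Infinite)
    (hf : ∀ i ∈ S, f i < B) : ∃ v, {i | i ∈ S ∧ f i = v}.Infinite := by
  by_contra h
  push_neg at h
  have hsub : S ⊆ ⋃ v ∈ Finset.range B, {i | i ∈ S ∧ f i = v} := by
    intro i hi
    simp only [Set.mem_iUnion]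
    exact ⟨f i, Finset.mem_range.mpr (hf i hi), hi, rfl⟩
  exact hS (Set.Finite.subset
    (Set.Finite.biUnion (Finset.range B).finite_toSet (fun v _ => h v)) hsub)

end Aux

theorem statement9 {G : Type*} [Group G] [TopologicalSpace G] [IsTopologicalGroup G]
    [T2Space G] [FrechetUrysohnSpace G]
    (g : ℕ → G) (hg : Tendsto g atTop (nhds (1 : G))) :
    ∃ m n : ℕ → ℕ, StrictMono m ∧ StrictMono n ∧
      Tendsto (fun k => g (n k) ^ (m k)) atTop (nhds (1 : G)) := by
  by_cases hA : ∀ K : ℕ, ∃ k, K ≤ k ∧ ∃ m', g (m' + k) ^ (k + 1) = 1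
  · choose k hk m' hm using hA
    have hb : Tendsto (fun K => m' K + k K) atTop atTop :=
      tendsto_atTop_mono (fun K => le_trans (hk K) (Nat.le_add_left _ _)) tendsto_id
    have he : Tendsto (fun K => k K + 1) atTop atTop :=
      tendsto_atTop_mono (fun K => le_trans (hk K) (Nat.le_succ _)) tendsto_id
    have hv : Tendsto (fun K => g (m' K + k K) ^ (k K + 1)) atTop (nhds (1 : G)) := by
      rw [show (fun K => g (m' K + k K) ^ (k K + 1)) = fun _ => (1 : G) from funext hm]
      exact tendsto_const_nhds
    exact aux_pack g _ _ hb he hv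
  · push_neg at hA
    obtain ⟨K, hK⟩ := hA
    set t : ℕ → G := fun p => g (p + K) ^ (K + 1) with ht_def
    have htne : ∀ p, t p ≠ 1 := fun p => hK K le_rfl p
    have ht : Tendsto t atTop (nhds (1 : G)) := by
      have h0 := (hg.comp (tendsto_add_atTop_nat K)).pow (K + 1)
      rwa [one_pow] at h0
    set ρ : ℕ → ℕ → G := fun p q => g (q + (K + 1 + p)) ^ (K + 1 + p + 1) with hρ_def
    have hρne : ∀ p q, ρ p q ≠ 1 := fun p q => hK (K + 1 + p) (by omega) q
    have hρt : ∀ p, Tendsto (fun q => ρ p q) atTop (nhds (1 : G)) := by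
      intro p
      have h0 := (hg.comp (tendsto_add_atTop_nat (K + 1 + p))).pow (K + 1 + p + 1)
      rwa [one_pow] at h0
    set A : Set G := {x | x ≠ 1 ∧ ∃ p q, x = t p * ρ p q} with hA_def
    have hcl : (1 : G) ∈ closure A := by
      rw [mem_closure_iff_nhds]
      intro U hU
      obtain ⟨V, hVo, hV1, hVV⟩ := exists_open_nhds_one_mul_subset hU
      have hevt : ∀ᶠ p in atTop, t p ∈ V := ht (hVo.mem_nhds hV1)
      obtain ⟨p, hp⟩ := hevt.exists
      have hfreq : ∃ᶠ q in atTop, ρ p q ≠ (t p)⁻¹ := by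
        by_contra hcon
        rw [Filter.not_frequently] at hcon
        have hcon' : ∀ᶠ q in atTop, ρ p q = (t p)⁻¹ :=
          hcon.mono fun q hq => not_not.mp hq
        have htend : Tendsto (fun q => ρ p q) atTop (nhds ((t p)⁻¹)) :=
          tendsto_const_nhds.congr' (hcon'.mono fun q hq => hq.symm)
        exact htne p (inv_eq_one.mp (tendsto_nhds_unique htend (hρt p)))
      have hevρ : ∀ᶠ q in atTop, ρ p q ∈ V := hρt p (hVo.mem_nhds hV1)
      obtain ⟨q, hqV, hqne⟩ := (hevρ.and_frequently hfreq).exists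
      refine ⟨t p * ρ p q, hVV (Set.mul_mem_mul hp hqV), ?_, p, q, rfl⟩
      intro hone
      exact hqne (eq_inv_of_mul_eq_one_right hone)
    obtain ⟨u, huA, hul⟩ := mem_closure_iff_seq_limit.mp hcl
    have hune : ∀ i, u i ≠ 1 := fun i => (huA i).1
    choose p q hpq using fun i => (huA i).2
    by_cases hP : ∀ B, ∃ i, B ≤ p i
    · have hfr : ∀ B, ∃ᶠ i in atTop, True ∧ B ≤ p i :=
        aux_freq (fun B => let ⟨i, hi⟩ := hP B; ⟨i, trivial, hi⟩)
      obtain ⟨φ, hφ, hφ2⟩ := Filter.extraction_forall_of_frequently hfr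
      have hPt : Tendsto (fun n => p (φ n)) atTop atTop :=
        tendsto_atTop_mono (fun n => (hφ2 n).2) tendsto_id
      have huφ : Tendsto (fun n => u (φ n)) atTop (nhds (1 : G)) :=
        hul.comp hφ.tendsto_atTop
      have htφ : Tendsto (fun n => t (p (φ n))) atTop (nhds (1 : G)) := ht.comp hPt
      have hw : Tendsto (fun n => ρ (p (φ n)) (q (φ n))) atTop (nhds (1 : G)) := by
        have h1 : Tendsto (fun n => (t (p (φ n)))⁻¹ * u (φ n)) atTop
            (nhds ((1 : G)⁻¹ * 1)) := htφ.inv.mul huφ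
        rw [inv_one, mul_one] at h1
        refine h1.congr fun n => ?_
        rw [hpq (φ n), inv_mul_cancel_left]
      have hb : Tendsto (fun n => q (φ n) + (K + 1 + p (φ n))) atTop atTop :=
        tendsto_atTop_mono (fun n => by have := (hφ2 n).2; simp only [id_eq]; omega) tendsto_id
      have he : Tendsto (fun n => K + 1 + p (φ n) + 1) atTop atTop :=
        tendsto_atTop_mono (fun n => by have := (hφ2 n).2; simp only [id_eq]; omega) tendsto_id
      exact aux_pack g _ _ hb he hw
    · push_neg at hP
      obtain ⟨B, hB⟩ := hP
      obtain ⟨p₀, hp₀⟩ := aux_pigeon (f := p) Set.infinite_univ (fun i _ => hB i)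
      by_cases hq : ∀ C, ∃ i, (i ∈ Set.univ ∧ p i = p₀) ∧ C ≤ q i
      · obtain ⟨φ, hφ, hφ2⟩ := Filter.extraction_forall_of_frequently (aux_freq hq)
        have hqt : Tendsto (fun n => q (φ n)) atTop atTop :=
          tendsto_atTop_mono (fun n => (hφ2 n).2) tendsto_id
        have huφ : Tendsto (fun n => u (φ n)) atTop (nhds (1 : G)) :=
          hul.comp hφ.tendsto_atTop
        have h2 : Tendsto (fun n => u (φ n)) atTop (nhds (t p₀)) := by
          have h0 : Tendsto (fun n => t p₀ * ρ p₀ (q (φ n))) atTop (nhds (t p₀ * 1)) :=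
            tendsto_const_nhds.mul ((hρt p₀).comp hqt)
          rw [mul_one] at h0
          refine h0.congr fun n => ?_
          rw [hpq (φ n), (hφ2 n).1.2]
        exact absurd (tendsto_nhds_unique h2 huφ) (htne p₀)
      · push_neg at hq
        obtain ⟨C, hC⟩ := hq
        obtain ⟨q₀, hq₀⟩ := aux_pigeon (f := q) hp₀ (fun i hi => hC i ⟨Set.mem_univ i, hi.2⟩)
        have hfr : ∃ᶠ i in atTop, (i ∈ {i | i ∈ Set.univ ∧ p i = p₀} ∧ q i = q₀) :=
          Nat.frequently_atTop_iff_infinite.mpr hq₀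
        obtain ⟨φ, hφ, hφ2⟩ :=
          Filter.extraction_forall_of_frequently (fun (_ : ℕ) => hfr)
        have hconst : ∀ n, u (φ n) = t p₀ * ρ p₀ q₀ := fun n => by
          rw [hpq (φ n), (hφ2 n).1.2, (hφ2 n).2]
        have h1 : Tendsto (fun n => u (φ n)) atTop (nhds (1 : G)) :=
          hul.comp hφ.tendsto_atTop
        have h2 : Tendsto (fun n => u (φ n)) atTop (nhds (t p₀ * ρ p₀ q₀)) := by
          rw [show (fun n => u (φ n)) = fun _ => t p₀ * ρ p₀ q₀ from funext hconst]
          exact tendsto_const_nhds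
        exact absurd ((hconst 0).trans (tendsto_nhds_unique h1 h2).symm) (hune (φ 0))
end

section
/- Let E be a topological vector space with a fundamental sequence of bounded sets (an increasing sequence (B_n) of bounded sets such that every bounded set is contained in some B_n). If E has property (PS) (for every sequence x_n → 0 there exist strictly increasing (m_k), (n_k) with m_k · x_{n_k} → 0), then E has a countable cs*-network at 0, namely the family { (1/k) B_n : k, n ∈ ℕ } with the B_n closed absolutely convex. -/
open Filter Set Topology Pointwise Bornology

theorem statement10 {E : Type*} [AddCommGroup E] [Module ℝ E] [TopologicalSpace E]
    [IsTopologicalAddGroup E] [ContinuousSMul ℝ E]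
    (B : ℕ → Set E) (hmono : Monotone B)
    (hbdd : ∀ n, Bornology.IsVonNBounded ℝ (B n))
    (hfund : ∀ S : Set E, Bornology.IsVonNBounded ℝ S → ∃ n, S ⊆ B n)
    (hclosed : ∀ n, IsClosed (B n)) (hbal : ∀ n, Balanced ℝ (B n))
    (hconv : ∀ n, Convex ℝ (B n))
    (hPS : ∀ x : ℕ → E, Tendsto x atTop (nhds 0) →
      ∃ m n : ℕ → ℕ, StrictMono m ∧ StrictMono n ∧
        Tendsto (fun k => (m k : ℝ) • x (n k)) atTop (nhds 0)) :
    IsCsStarNetworkAt {S : Set E | ∃ k n : ℕ, 1 ≤ k ∧ S = ((k : ℝ)⁻¹) • B n} (0 : E) := by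
  intro u hu O hO
  obtain ⟨m, n, hm, hn, hmn⟩ := hPS u hu
  obtain ⟨N, hN⟩ := hfund _ (hmn.isVonNBounded_range ℝ)
  obtain ⟨c, hsub, hc1⟩ := ((hbdd N hO).and (eventually_cobounded_le_norm 1)).exists
  have hc0 : c ≠ 0 := fun h => by simp [h] at hc1; linarith
  set K : ℕ := ⌈‖c‖⌉₊ with hKdef
  have hK1 : 1 ≤ K := Nat.one_le_ceil_iff.2 (by linarith)
  have hKc : ‖c‖ ≤ (K : ℝ) := Nat.le_ceil _
  have hKpos : (0:ℝ) < K := by exact_mod_cast hK1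
  have hBne : (0:E) ∈ B N := by
    have : (m 0 : ℝ) • u (n 0) ∈ B N := hN ⟨0, rfl⟩
    simpa using (hbal N).smul_mem (a := 0) (by simp) this
  refine ⟨(K:ℝ)⁻¹ • B N, ⟨K, N, hK1, rfl⟩, ⟨0, hBne, by simp⟩, ?_, ?_⟩
  · rintro x ⟨b, hb, rfl⟩
    have hb' : (c * (K:ℝ)⁻¹) • b ∈ B N := by
      apply (hbal N).smul_mem _ hb
      rw [norm_mul, norm_inv, Real.norm_of_nonneg hKpos.le]
      have h1 : ‖c‖ * ((K:ℝ))⁻¹ ≤ (K:ℝ) * ((K:ℝ))⁻¹ := by gcongr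
      simpa [mul_inv_cancel₀ hKpos.ne'] using h1
    obtain ⟨o, ho, hoe⟩ := hsub hb'
    have h2 := congrArg (fun z => c⁻¹ • z) hoe
    simp only [smul_smul] at h2
    rw [inv_mul_cancel₀ hc0, one_smul, ← mul_assoc, inv_mul_cancel₀ hc0, one_mul] at h2
    show (K:ℝ)⁻¹ • b ∈ O
    rw [h2] at ho
    exact ho
  · have hsubset : n '' {k | K ≤ m k} ⊆ {j | u j ∈ (K:ℝ)⁻¹ • B N} := by
      rintro _ ⟨k, hk, rfl⟩
      have hmk : (0:ℝ) < (m k : ℝ) := by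
        have : 1 ≤ m k := le_trans hK1 hk
        exact_mod_cast this
      have hb : ((K:ℝ) * (m k : ℝ)⁻¹) • ((m k : ℝ) • u (n k)) ∈ B N := by
        apply (hbal N).smul_mem _ (hN ⟨k, rfl⟩)
        rw [norm_mul, norm_inv, Real.norm_of_nonneg hKpos.le,
          Real.norm_of_nonneg hmk.le]
        have hKm : (K:ℝ) ≤ (m k : ℝ) := by exact_mod_cast hk
        calc (K:ℝ) * ((m k : ℝ))⁻¹ ≤ (m k : ℝ) * ((m k : ℝ))⁻¹ := by gcongr
          _ = 1 := mul_inv_cancel₀ hmk.ne'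
      refine ⟨_, hb, ?_⟩
      show (K:ℝ)⁻¹ • ((K:ℝ) * ((m k:ℝ))⁻¹) • ((m k:ℝ) • u (n k)) = u (n k)
      rw [smul_smul, smul_smul]
      have h3 : ((K:ℝ)⁻¹ * ((K:ℝ) * ((m k:ℝ))⁻¹) * (m k:ℝ)) = 1 := by field_simp
      rw [h3, one_smul]
    refine Set.Infinite.mono hsubset (Set.Infinite.image (hn.injective.injOn) ?_)
    refine Set.infinite_of_not_bddAbove ?_
    rintro ⟨a, ha⟩
    have h1 : K ≤ m (max a K + 1) := le_trans (le_trans (le_max_right a K) (Nat.le_succ _)) (hm.le_apply)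
    have := ha h1
    omega
end

section
/- A topological vector space E that is Fréchet–Urysohn and admits a fundamental sequence of bounded sets is locally bounded, i.e., has a bounded neighborhood of zero (equivalently, E is p-normable for some 0 < p ≤ 1). -/
open Filter Set Topology Pointwise Bornology

theorem statement11 {E : Type*} [AddCommGroup E] [Module ℝ E] [TopologicalSpace E]
    [IsTopologicalAddGroup E] [ContinuousSMul ℝ E] [T2Space E] [FrechetUrysohnSpace E]
    (B : ℕ → Set E) (hmono : Monotone B)
    (hbdd : ∀ n, Bornology.IsVonNBounded ℝ (B n))
    (hfund : ∀ S : Set E, Bornology.IsVonNBounded ℝ S → ∃ n, S ⊆ B n) :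
    ∃ U ∈ nhds (0 : E), Bornology.IsVonNBounded ℝ U := by
  by_contra hcon
  push_neg at hcon
  -- Every bounded set has `0` in the closure of its complement.
  have hcl : ∀ S : Set E, Bornology.IsVonNBounded ℝ S → (0 : E) ∈ closure Sᶜ := by
    intro S hS
    rw [mem_closure_iff_nhds]
    intro U hU
    rcases Set.not_subset.1 (fun hsub => hcon U hU (hS.subset hsub)) with ⟨x, hxU, hxS⟩
    exact ⟨x, hxU, hxS⟩
  -- a sequence of nonzero points converging to 0
  obtain ⟨x0, hx0mem, hx0lim⟩ :=
    mem_closure_iff_seq_limit.1 (hcl ({0} : Set E) (Bornology.isVonNBounded_singleton 0))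
  -- for each n, a sequence converging to 0 avoiding `B (n+1) ∪ {-(x0 n)}`
  have hyex : ∀ n : ℕ, ∃ y : ℕ → E,
      (∀ k, y k ∉ B (n + 1) ∪ {-(x0 n)}) ∧ Tendsto y atTop (nhds 0) := by
    intro n
    obtain ⟨y, hy1, hy2⟩ := mem_closure_iff_seq_limit.1
      (hcl _ ((hbdd (n + 1)).union (Bornology.isVonNBounded_singleton (-(x0 n)))))
    exact ⟨y, hy1, hy2⟩
  choose y hy1 hy2 using hyex
  set A : Set E := {z | ∃ n k : ℕ, z = x0 n + y n k} with hAdef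
  have hxA : ∀ n, x0 n ∈ closure A := by
    intro n
    refine mem_closure_of_tendsto (b := atTop) (f := fun k => x0 n + y n k) ?_
      (Filter.Eventually.of_forall fun k => ⟨n, k, rfl⟩)
    simpa using tendsto_const_nhds.add (hy2 n)
  have h0A : (0 : E) ∈ closure A := by
    have := mem_closure_of_tendsto hx0lim (Filter.Eventually.of_forall hxA)
    rwa [closure_closure] at this
  obtain ⟨a, haA, halim⟩ := mem_closure_iff_seq_limit.1 h0A
  choose nn kk hnk using haA
  -- all fibers of `nn` are finite
  have hfib : ∀ N, {j | nn j = N}.Finite := by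
    intro N
    by_contra hinf
    obtain ⟨φ, hφ, hφN⟩ :=
      Filter.extraction_of_frequently_atTop (Nat.frequently_atTop_iff_infinite.2 hinf)
    have haφ : Tendsto (fun i => a (φ i)) atTop (nhds 0) := halim.comp hφ.tendsto_atTop
    have hc : Tendsto (fun i => y N (kk (φ i))) atTop (nhds (-(x0 N))) := by
      have heq : (fun i => y N (kk (φ i))) = fun i => a (φ i) - x0 N := by
        funext i
        rw [hnk (φ i), hφN i]
        abel
      rw [heq]
      simpa using haφ.sub (tendsto_const_nhds (x := x0 N))
    by_cases hran : (Set.range fun i => kk (φ i)).Finite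
    · -- some value of `kk ∘ φ` occurs infinitely often
      haveI : Finite (Set.range fun i => kk (φ i)) := hran.to_subtype
      obtain ⟨v, hv⟩ := Finite.exists_infinite_fiber (Set.rangeFactorization fun i => kk (φ i))
      have hvinf : {i | kk (φ i) = (v : ℕ)}.Infinite := by
        rw [← Set.infinite_coe_iff]
        refine Set.infinite_coe_iff.2 ?_
        have : ((Set.rangeFactorization fun i => kk (φ i)) ⁻¹' {v}) =
            {i | kk (φ i) = (v : ℕ)} := by
          ext i
          simp [Set.rangeFactorization, Subtype.ext_iff]
        rw [← this, ← Set.infinite_coe_iff]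
        exact hv
      obtain ⟨χ, hχ, hχv⟩ :=
        Filter.extraction_of_frequently_atTop (Nat.frequently_atTop_iff_infinite.2 hvinf)
      have hconst : Tendsto (fun i => y N (kk (φ (χ i)))) atTop (nhds (-(x0 N))) :=
        hc.comp hχ.tendsto_atTop
      have hconst' : Tendsto (fun _ : ℕ => y N (v : ℕ)) atTop (nhds (-(x0 N))) := by
        have : (fun i => y N (kk (φ (χ i)))) = fun _ : ℕ => y N (v : ℕ) := by
          funext i; rw [hχv i]
        rwa [this] at hconst
      have : y N (v : ℕ) = -(x0 N) := tendsto_nhds_unique tendsto_const_nhds hconst'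
      exact hy1 N (v : ℕ) (Set.mem_union_right _ (by simp [this]))
    · -- `kk ∘ φ` is unbounded
      have hfr : ∀ M : ℕ, ∃ᶠ i in atTop, M ≤ kk (φ i) := by
        intro M
        rw [Nat.frequently_atTop_iff_infinite]
        intro hfin
        apply hran
        have hsub : (Set.range fun i => kk (φ i)) ⊆
            Set.Iio M ∪ (fun i => kk (φ i)) '' {i | M ≤ kk (φ i)} := by
          rintro _ ⟨i, rfl⟩
          rcases lt_or_ge (kk (φ i)) M with h | h
          · exact Or.inl h
          · exact Or.inr ⟨i, h, rfl⟩
        exact Set.Finite.subset ((Set.finite_Iio M).union (hfin.image _)) hsub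
      obtain ⟨ψ, hψ, hψge⟩ := Filter.extraction_forall_of_frequently hfr
      have htop : Tendsto (fun i => kk (φ (ψ i))) atTop atTop :=
        Filter.tendsto_atTop_mono hψge Filter.tendsto_id
      have h1 : Tendsto (fun i => y N (kk (φ (ψ i)))) atTop (nhds 0) := (hy2 N).comp htop
      have h2 : Tendsto (fun i => y N (kk (φ (ψ i)))) atTop (nhds (-(x0 N))) :=
        hc.comp hψ.tendsto_atTop
      have : (0 : E) = -(x0 N) := tendsto_nhds_unique h1 h2
      exact hx0mem N (by simp [show x0 N = 0 from by simpa using this.symm])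
  -- hence `nn` tends to infinity
  have hnntop : Tendsto nn atTop atTop := by
    refine Filter.tendsto_atTop.2 fun b => ?_
    rw [← Nat.cofinite_eq_atTop, Filter.eventually_cofinite]
    have hsub : {j | ¬ b ≤ nn j} ⊆ ⋃ m ∈ Set.Iio b, {j | nn j = m} := by
      intro j hj
      simp only [Set.mem_setOf_eq, not_le] at hj
      exact Set.mem_biUnion hj rfl
    exact Set.Finite.subset ((Set.finite_Iio b).biUnion fun m _ => hfib m) hsub
  -- the diagonal sequence
  have hblim : Tendsto (fun j => y (nn j) (kk j)) atTop (nhds 0) := by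
    have hx0n : Tendsto (fun j => x0 (nn j)) atTop (nhds 0) := hx0lim.comp hnntop
    have heq : (fun j => y (nn j) (kk j)) = fun j => a j - x0 (nn j) := by
      funext j
      rw [hnk j]
      abel
    rw [heq]
    simpa using halim.sub hx0n
  obtain ⟨m, hm⟩ := hfund _ (hblim.isVonNBounded_range ℝ)
  obtain ⟨j, hj⟩ := (hnntop.eventually_ge_atTop m).exists
  exact hy1 (nn j) (kk j)
    (Set.mem_union_left _ (hmono (hj.trans (Nat.le_succ _)) (hm ⟨j, rfl⟩)))
end

section
/- Let E be a metrizable topological vector space with a decreasing base (U_n) of balanced neighborhoods of zero and a fundamental increasing sequence (B_n) of balanced bounded sets. Then some B_n is a neighborhood of zero; consequently E is locally bounded. (Key step: if U_n ⊄ n·B_n for all n, choosing (1/n)·x_n ∈ U_n \ B_n gives a bounded set {(1/n)x_n : n ∈ ℕ} not contained in any B_n, a contradiction.) -/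
open Filter Set Topology Pointwise Bornology

theorem statement12 {E : Type*} [AddCommGroup E] [Module ℝ E] [TopologicalSpace E]
    [IsTopologicalAddGroup E] [ContinuousSMul ℝ E] [T2Space E]
    (U : ℕ → Set E) (hUdec : Antitone U) (hUbal : ∀ n, Balanced ℝ (U n))
    (hUnhds : ∀ n, U n ∈ nhds (0 : E))
    (hUbase : ∀ O ∈ nhds (0 : E), ∃ n, U n ⊆ O)
    (B : ℕ → Set E) (hmono : Monotone B) (hBbal : ∀ n, Balanced ℝ (B n))
    (hbdd : ∀ n, Bornology.IsVonNBounded ℝ (B n))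
    (hfund : ∀ S : Set E, Bornology.IsVonNBounded ℝ S → ∃ n, S ⊆ B n) :
    ∃ n, B n ∈ nhds (0 : E) := by
  by_contra h
  push_neg at h
  -- For each n, U n is not contained in (n+1) • B n
  have key : ∀ n : ℕ, ∃ x ∈ U n, x ∉ ((n : ℝ) + 1) • B n := by
    intro n
    by_contra hc
    push_neg at hc
    have hmem : ((n : ℝ) + 1) • B n ∈ nhds (0 : E) :=
      Filter.mem_of_superset (hUnhds n) hc
    have hne : ((n : ℝ) + 1) ≠ 0 := by positivity
    exact h n ((set_smul_mem_nhds_zero_iff hne).mp hmem)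
  choose x hxU hxB using key
  set y : ℕ → E := fun n => ((n : ℝ) + 1)⁻¹ • x n with hy
  have hyU : ∀ n, y n ∈ U n := fun n =>
    (hUbal n) (((n : ℝ) + 1)⁻¹) (by
      rw [Real.norm_eq_abs, abs_inv, abs_of_nonneg (by positivity)]
      apply inv_le_one_of_one_le₀
      linarith [Nat.cast_nonneg (α := ℝ) n]) (Set.smul_mem_smul_set (hxU n))
  have hyB : ∀ n, y n ∉ B n := by
    intro n hyn
    apply hxB n
    have : ((n : ℝ) + 1) • y n ∈ ((n : ℝ) + 1) • B n := Set.smul_mem_smul_set hyn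
    rwa [hy, smul_inv_smul₀ (by positivity : ((n : ℝ) + 1) ≠ 0)] at this
  have hten : Filter.Tendsto y Filter.atTop (nhds (0 : E)) := by
    intro O hO
    rcases hUbase O hO with ⟨n0, hn0⟩
    rw [Filter.mem_map]
    filter_upwards [Filter.eventually_ge_atTop n0] with n hn
    exact hn0 (hUdec hn (hyU n))
  have hbddy : Bornology.IsVonNBounded ℝ (Set.range y) := hten.isVonNBounded_range ℝ
  obtain ⟨m, hm⟩ := hfund _ hbddy
  exact hyB m (hm ⟨m, rfl⟩)
end

section
/- Let G be a topological group and 𝒟 a countable ck-network at the identity e that is closed under finite products (pointwise set products), and let {g_n : n ∈ ℕ} be dense in G. Then the countable family { g_n · D_m : n, m ∈ ℕ } is a ck-network at every point of G. -/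
open Filter Set Topology Pointwise Bornology

theorem statement18 {G : Type*} [Group G] [TopologicalSpace G] [IsTopologicalGroup G]
    (𝒟 : Set (Set G)) (hc : 𝒟.Countable) (hck : IsCkNetworkAt 𝒟 (1 : G))
    (hprod : ∀ A ∈ 𝒟, ∀ B ∈ 𝒟, A * B ∈ 𝒟)
    (S : Set G) (hSc : S.Countable) (hSd : Dense S) :
    ∀ x : G, IsCkNetworkAt {N : Set G | ∃ s ∈ S, ∃ D ∈ 𝒟, N = s • D} x := by
  classical
  intro x O hO
  have hO0 : x⁻¹ • O ∈ nhds (1 : G) := by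
    have := smul_mem_nhds_smul x⁻¹ hO
    simpa using this
  obtain ⟨W₁, hW₁o, hW₁1, hW₁⟩ := exists_open_nhds_one_mul_subset hO0
  obtain ⟨W, hWo, hW1, hWW⟩ := exists_open_nhds_one_mul_subset (hW₁o.mem_nhds hW₁1)
  have hWsub : W ⊆ W₁ := fun a ha => by
    have : a * 1 ∈ W₁ := hWW (Set.mul_mem_mul ha hW1)
    simpa using this
  -- triple product fact
  have hWWW : ∀ a ∈ W, ∀ b ∈ W, ∀ c ∈ W, a * b * c ∈ x⁻¹ • O := by
    intro a ha b hb c hc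
    exact hW₁ (Set.mul_mem_mul (hWW (Set.mul_mem_mul ha hb)) (hWsub hc))
  obtain ⟨U₁, hU₁, hP⟩ := hck W (hWo.mem_nhds hW1)
  obtain ⟨V₂, hV₂o, hV₂1, hV₂⟩ := exists_open_nhds_one_mul_subset hU₁
  set V : Set G := (W ∩ V₂) ∩ (W ∩ V₂)⁻¹ with hVdef
  have hVo : IsOpen V := ((hWo.inter hV₂o).inter (hWo.inter hV₂o).inv)
  have hV1 : (1 : G) ∈ V := ⟨⟨hW1, hV₂1⟩, by simp [hW1, hV₂1]⟩
  have hVW : V ⊆ W := fun a ha => ha.1.1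
  have hVV₂ : V ⊆ V₂ := fun a ha => ha.1.2
  have hVsymm : ∀ a ∈ V, a⁻¹ ∈ V := by
    intro a ha
    exact ⟨ha.2, by simpa using ha.1⟩
  have hVU₁ : ∀ a ∈ V, ∀ b ∈ V, a * b ∈ U₁ :=
    fun a ha b hb => hV₂ (Set.mul_mem_mul (hVV₂ ha) (hVV₂ hb))
  have hxV : x ∈ x • V := ⟨1, hV1, mul_one x⟩
  obtain ⟨s, hsS, hsx⟩ := hSd.exists_mem_open (hVo.smul x) ⟨x, hxV⟩
  obtain ⟨v, hv, rfl⟩ := hsx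
  -- s = x • v = x * v
  have hsinv : (x • v)⁻¹ * x = v⁻¹ := by
    simp [smul_eq_mul, mul_inv_rev, mul_assoc]
  -- get E ∈ 𝒟 with v⁻¹ ∈ E, 1 ∈ E, E ⊆ W
  have hvinvU₁ : v⁻¹ ∈ U₁ := by
    have : v⁻¹ * 1 ∈ U₁ := hVU₁ _ (hVsymm v hv) _ hV1
    simpa using this
  obtain ⟨F₀, hF₀sub, hF₀mem, hF₀cov, hF₀O⟩ :=
    hP {v⁻¹} (by simpa using hvinvU₁) isCompact_singleton
  obtain ⟨E, hEF₀, hvE⟩ : ∃ E ∈ (F₀ : Set (Set G)), v⁻¹ ∈ E := by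
    have := hF₀cov (Set.mem_singleton v⁻¹)
    simpa [Set.mem_sUnion] using this
  have h1E : (1 : G) ∈ E := hF₀mem E hEF₀
  have hEW : E ⊆ W := fun a ha => hF₀O ⟨E, hEF₀, ha⟩
  have hE𝒟 : E ∈ 𝒟 := hF₀sub hEF₀
  refine ⟨x • V, (hVo.smul x).mem_nhds hxV, ?_⟩
  intro K hKU hKc
  -- translated compact
  have hK' : ((x • v)⁻¹ • K : Set G) ⊆ U₁ := by
    rintro _ ⟨k, hk, rfl⟩
    obtain ⟨w, hw, rfl⟩ := hKU hk
    have : v⁻¹ * w ∈ U₁ := hVU₁ _ (hVsymm v hv) _ hw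
    simpa [smul_eq_mul, mul_inv_rev, mul_assoc] using this
  obtain ⟨F', hF'sub, hF'mem, hF'cov, hF'O⟩ := hP _ hK' (hKc.smul _)
  refine ⟨F'.image (fun D => (x • v) • (D * E)), ?_, ?_, ?_, ?_⟩
  · intro N hN
    simp only [Finset.coe_image, Set.mem_image, Finset.mem_coe] at hN
    obtain ⟨D, hD, rfl⟩ := hN
    exact ⟨x • v, hsS, D * E, hprod D (hF'sub hD) E hE𝒟, rfl⟩
  · intro f hf
    simp only [Finset.mem_image] at hf
    obtain ⟨D, hD, rfl⟩ := hf
    refine ⟨v⁻¹, ?_, by simp [smul_eq_mul, mul_assoc]⟩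
    have : (1 : G) * v⁻¹ ∈ D * E := Set.mul_mem_mul (hF'mem D hD) hvE
    simpa using this
  · intro k hk
    have hk' : (x • v)⁻¹ * k ∈ ⋃₀ (F' : Set (Set G)) :=
      hF'cov ⟨k, hk, rfl⟩
    obtain ⟨D, hD, hkD⟩ := hk'
    refine ⟨(x • v) • (D * E), ?_, ?_⟩
    · simp only [Finset.coe_image, Set.mem_image, Finset.mem_coe]
      exact ⟨D, hD, rfl⟩
    · refine ⟨(x • v)⁻¹ * k, ?_, by simp [smul_eq_mul, mul_assoc]⟩
      have : ((x • v)⁻¹ * k) * 1 ∈ D * E := Set.mul_mem_mul hkD h1E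
      simpa using this
  · intro a ha
    obtain ⟨f, hf, haf⟩ := ha
    simp only [Finset.coe_image, Set.mem_image, Finset.mem_coe] at hf
    obtain ⟨D, hD, rfl⟩ := hf
    obtain ⟨b, hb, rfl⟩ := haf
    obtain ⟨d, hd, e, he, rfl⟩ := hb
    have hdW : d ∈ W := hF'O ⟨D, hD, hd⟩
    have heW : e ∈ W := hEW he
    have hvW : v ∈ W := hVW hv
    obtain ⟨o, ho, heq⟩ := hWWW v hvW d hdW e heW
    have hthis : (x • v) • (d * e) = o := by
      have h2 : x⁻¹ * o = v * d * e := by simpa [smul_eq_mul] using heq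
      have h3 : x * (x⁻¹ * o) = x * (v * d * e) := by rw [h2]
      simpa [smul_eq_mul, mul_assoc] using h3.symm
    show (x • v) • (d * e) ∈ O
    exact hthis.symm ▸ ho
end

section
/- If a regular topological space X has a countable network, then X admits a small base satisfying condition (D): there exist M ⊆ ℕ^ℕ and an M-decreasing base {U_α : α ∈ M} of the topology such that U_α = ⋃_k D_k(α) for all α ∈ M, where D_k(α) = ⋂{U_β : β ∈ M, β_i = α_i for i ≤ k}; and conversely, a space with such a small base has a countable network, namely {D_k(α) : α ∈ M, k ∈ ℕ}. -/
open Filter Set Topology Pointwise Bornology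

section Aux
variable {X : Type*} [TopologicalSpace X] [RegularSpace X]

/-- closed-closure network: from a network and regularity. -/
lemma aux_clnet (f : ℕ → Set X)
    (hnet : ∀ O : Set X, IsOpen O → ∀ x ∈ O, ∃ n, x ∈ f n ∧ f n ⊆ O) :
    ∀ O : Set X, IsOpen O → ∀ x ∈ O, ∃ n, x ∈ f n ∧ closure (f n) ⊆ O := by
  intro O hO x hx
  obtain ⟨C, hCn, hCc, hCO⟩ := exists_mem_nhds_isClosed_subset (hO.mem_nhds hx)
  obtain ⟨n, hxn, hns⟩ := hnet (interior C) isOpen_interior x (mem_interior_iff_mem_nhds.2 hCn)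
  exact ⟨n, hxn, ((closure_mono hns).trans (closure_minimal interior_subset hCc)).trans hCO⟩

lemma aux_cover (f : ℕ → Set X)
    (hnet : ∀ O : Set X, IsOpen O → ∀ x ∈ O, ∃ n, x ∈ f n ∧ f n ⊆ O)
    (n₀ : ℕ) (hn₀ : f n₀ = ∅) :
    ∀ O : Set X, IsOpen O → ∀ x ∈ O,
      ∃ e : ℕ → ℕ, x ∉ closure (⋃ j, closure (f (e j))) ∧ Oᶜ ⊆ ⋃ j, closure (f (e j)) := by
  intro O hO x hx
  obtain ⟨C, hCn, hCc, hCO⟩ := exists_mem_nhds_isClosed_subset (hO.mem_nhds hx)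
  set K : Set X := closure (interior C) with hK
  have hKC : K ⊆ C := closure_minimal interior_subset hCc
  obtain ⟨e, he⟩ : ∃ e : ℕ → ℕ, {n | f n ⊆ Kᶜ} ∪ {n₀} = Set.range e :=
    (Set.to_countable _).exists_eq_range ⟨n₀, Or.inr rfl⟩
  refine ⟨e, ?_, ?_⟩
  · have hsub : (⋃ j, closure (f (e j))) ⊆ (interior K)ᶜ := by
      refine iUnion_subset fun j => ?_
      have : e j ∈ {n | f n ⊆ Kᶜ} ∪ {n₀} := he ▸ Set.mem_range_self j
      rcases this with h | h
      · rw [← closure_compl]; exact closure_mono h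
      · simp [Set.mem_singleton_iff.1 h, hn₀]
    have : closure (⋃ j, closure (f (e j))) ⊆ (interior K)ᶜ :=
      closure_minimal hsub isOpen_interior.isClosed_compl
    intro hxc
    have hxK : x ∈ interior K := by
      have : interior C ⊆ interior K := interior_maximal subset_closure isOpen_interior
      exact this (mem_interior_iff_mem_nhds.2 hCn)
    exact (this hxc) hxK
  · intro y hy
    have hyK : y ∈ Kᶜ := fun h => hy (hCO (hKC h))
    obtain ⟨n, hyn, hns⟩ := hnet Kᶜ isClosed_closure.isOpen_compl y hyK
    have : n ∈ Set.range e := he ▸ Or.inl hns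
    obtain ⟨j, rfl⟩ := this
    exact mem_iUnion.2 ⟨j, subset_closure hyn⟩
end Aux

theorem statement19 {X : Type*} [TopologicalSpace X] :
    (RegularSpace X → (∃ N : Set (Set X), N.Countable ∧ IsNetwork N) →
      ∃ (M : Set (ℕ → ℕ)) (U : (ℕ → ℕ) → Set X), IsSmallBaseTop M U ∧ CondD M U) ∧
    (∀ (M : Set (ℕ → ℕ)) (U : (ℕ → ℕ) → Set X), IsSmallBaseTop M U → CondD M U →
      ({D | ∃ α ∈ M, ∃ k : ℕ, D = Dk M U k α} : Set (Set X)).Countable ∧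
      IsNetwork {D | ∃ α ∈ M, ∃ k : ℕ, D = Dk M U k α}) := by

  constructor
  · intro hreg ⟨N, hNc, hNnet⟩
    haveI := hreg
    obtain ⟨f, hf⟩ : ∃ f : ℕ → Set X, insert ∅ N = Set.range f :=
      (hNc.insert ∅).exists_eq_range ⟨∅, Set.mem_insert _ _⟩
    have hnet : ∀ O : Set X, IsOpen O → ∀ x ∈ O, ∃ n, x ∈ f n ∧ f n ⊆ O := by
      intro O hO x hx
      obtain ⟨t, htN, hxt, htO⟩ := hNnet O hO x hx
      obtain ⟨n, rfl⟩ : t ∈ Set.range f := hf ▸ Set.mem_insert_of_mem _ htN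
      exact ⟨n, hxt, htO⟩
    obtain ⟨n₀, hn₀⟩ : ∃ n₀, f n₀ = ∅ := by
      have : (∅ : Set X) ∈ Set.range f := hf ▸ Set.mem_insert _ _
      obtain ⟨n₀, h⟩ := this
      exact ⟨n₀, h⟩
    refine ⟨{α | (∀ m, α (2*m+1) = if α (2 * (Nat.unpair m).1) = (Nat.unpair m).2 then 1 else 0) ∧
        (∀ j, f (α (4*j+2)) ∩ closure (⋃ i, ⋃ (_ : j ≤ i), closure (f (α (4*i)))) = ∅) ∧
        ((closure (⋃ i, closure (f (α (4*i)))))ᶜ ⊆ ⋃ j, f (α (4*j+2)))},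
      fun α => (closure (⋃ i, closure (f (α (4*i)))))ᶜ, ⟨?_, ?_, ?_⟩, ?_⟩
    · -- M-decreasing (antichain argument)
      intro α hα β hβ hle
      have heq : ∀ i, β (2*i) = α (2*i) := by
        intro i
        by_contra hne
        have h1 : α (2 * (Nat.pair i (α (2*i))) + 1) = 1 := by
          have h := hα.1 (Nat.pair i (α (2*i)))
          rw [Nat.unpair_pair] at h
          rw [h, if_pos rfl]
        have h2 : β (2 * (Nat.pair i (α (2*i))) + 1) = 0 := by
          have h := hβ.1 (Nat.pair i (α (2*i)))
          rw [Nat.unpair_pair] at h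
          rw [h, if_neg hne]
        have h3 : α (2 * (Nat.pair i (α (2*i))) + 1) ≤ β (2 * (Nat.pair i (α (2*i))) + 1) := hle _
        rw [h1, h2] at h3
        omega
      have h4 : ∀ i, β (4*i) = α (4*i) := by
        intro i
        have h42 : (4:ℕ)*i = 2*(2*i) := by ring
        rw [h42]
        exact heq (2*i)
      simp only [h4]
      exact fun y hy => hy
    · -- open
      intro α _
      exact isClosed_closure.isOpen_compl
    · -- base
      intro O hO x hx
      obtain ⟨e, hxe, hOe⟩ := aux_cover f hnet n₀ hn₀ O hO x hx
      have hWopen : IsOpen (closure (⋃ j, closure (f (e j))))ᶜ := isClosed_closure.isOpen_compl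
      have hWO : (closure (⋃ j, closure (f (e j))))ᶜ ⊆ O := by
        intro y hy
        by_contra hyO
        exact hy (subset_closure (hOe hyO))
      obtain ⟨c, hc⟩ : ∃ c : ℕ → ℕ,
          {n | closure (f n) ⊆ (closure (⋃ j, closure (f (e j))))ᶜ} ∪ {n₀} = Set.range c :=
        (Set.to_countable _).exists_eq_range ⟨n₀, Or.inr rfl⟩
      set γ : ℕ → ℕ := fun t => if t % 2 = 0 then e (t/2) else c (t/2) with hγ
      set α : ℕ → ℕ := fun m => if m % 2 = 0 then γ (m/2)
          else if γ ((Nat.unpair (m/2)).1) = (Nat.unpair (m/2)).2 then 1 else 0 with hαdef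
      have hag : ∀ i, α (2*i) = γ i := by
        intro i
        have h1 : (2*i) % 2 = 0 := by omega
        have h2 : (2*i)/2 = i := by omega
        simp [hαdef, h1, h2]
      have hae : ∀ i, α (4*i) = e i := by
        intro i
        have h1 : (4*i) % 2 = 0 := by omega
        have h2 : (4*i)/2 = 2*i := by omega
        have h3 : (2*i) % 2 = 0 := by omega
        have h4 : (2*i)/2 = i := by omega
        simp [hαdef, hγ, h1, h2, h3, h4]
      have hac : ∀ j, α (4*j+2) = c j := by
        intro j
        have h1 : (4*j+2) % 2 = 0 := by omega
        have h2 : (4*j+2)/2 = 2*j+1 := by omega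
        have h3 : ¬((2*j+1) % 2 = 0) := by omega
        have h4 : (2*j+1)/2 = j := by omega
        simp [hαdef, hγ, h1, h2, h3, h4]
      have hao : ∀ m, α (2*m+1) = if γ ((Nat.unpair m).1) = (Nat.unpair m).2 then 1 else 0 := by
        intro m
        have h1 : ¬((2*m+1) % 2 = 0) := by omega
        have h2 : (2*m+1)/2 = m := by omega
        simp [hαdef, h1, h2]
      refine ⟨α, ⟨?_, ?_, ?_⟩, ?_, ?_⟩
      · intro m
        rw [hao m, hag (Nat.unpair m).1]
      · intro j
        rw [hac j]
        simp only [hae]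
        have hcj : c j ∈ {n | closure (f n) ⊆ (closure (⋃ j, closure (f (e j))))ᶜ} ∪ {n₀} :=
          hc ▸ Set.mem_range_self j
        rcases hcj with h | h
        · apply Set.eq_empty_iff_forall_notMem.2
          rintro y ⟨hy1, hy2⟩
          have hsub2 : closure (⋃ i, ⋃ (_ : j ≤ i), closure (f (e i))) ⊆
              closure (⋃ i, closure (f (e i))) :=
            closure_mono (Set.iUnion_mono fun i => Set.iUnion_subset fun _ => subset_rfl)
          exact h (subset_closure hy1) (hsub2 hy2)
        · rw [Set.mem_singleton_iff.1 h, hn₀]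
          simp
      · simp only [hae, hac]
        intro y hy
        obtain ⟨n, hyn, hns⟩ := aux_clnet f hnet _ hWopen y hy
        have : n ∈ Set.range c := hc ▸ Or.inl hns
        obtain ⟨j, rfl⟩ := this
        exact Set.mem_iUnion.2 ⟨j, hyn⟩
      · simp only [hae]
        exact hxe
      · simp only [hae]
        exact hWO
    · -- Condition (D)
      intro α hα
      apply Set.Subset.antisymm
      · intro x hx
        obtain ⟨j₀, hj₀⟩ := Set.mem_iUnion.1 (hα.2.2 hx)
        refine Set.mem_iUnion.2 ⟨4*j₀+3, Set.mem_iInter₂.2 fun β hβ => ?_⟩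
        obtain ⟨hβM, hagr⟩ := hβ
        have hsplit : (⋃ i, closure (f (β (4*i)))) =
            (⋃ i, ⋃ (_ : i < j₀), closure (f (β (4*i)))) ∪
            (⋃ i, ⋃ (_ : j₀ ≤ i), closure (f (β (4*i)))) := by
          ext y
          simp only [Set.mem_iUnion, Set.mem_union]
          constructor
          · rintro ⟨i, hi⟩
            rcases lt_or_ge i j₀ with h | h
            · exact Or.inl ⟨i, h, hi⟩
            · exact Or.inr ⟨i, h, hi⟩
          · rintro (⟨i, _, hi⟩ | ⟨i, _, hi⟩) <;> exact ⟨i, hi⟩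
        show x ∈ (closure (⋃ i, closure (f (β (4*i)))))ᶜ
        rw [hsplit, closure_union]
        rintro (h | h)
        · have hsub : (⋃ i, ⋃ (_ : i < j₀), closure (f (β (4*i)))) ⊆
              ⋃ i, closure (f (α (4*i))) := by
            intro y hy
            obtain ⟨i, hi, hyi⟩ := by simpa using hy
            refine Set.mem_iUnion.2 ⟨i, ?_⟩
            rwa [← hagr (4*i) (by omega)]
          exact hx (closure_mono hsub h)
        · have hdisj := hβM.2.1 j₀
          have hxf : x ∈ f (β (4*j₀+2)) := by
            rw [hagr (4*j₀+2) (by omega)]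
            exact hj₀
          exact absurd hdisj (Set.nonempty_iff_ne_empty.1 ⟨x, hxf, h⟩)
      · refine Set.iUnion_subset fun k => ?_
        exact Set.biInter_subset_of_mem ⟨hα, fun i _ => rfl⟩

  · intro M U hSB hD
    constructor
    · -- countability via List ℕ
      set h : List ℕ → Set X := fun l => ⋂ β ∈ {β ∈ M | ∀ i < l.length, β i = l.getD i 0}, U β with hh
      have hsub : {D | ∃ α ∈ M, ∃ k : ℕ, D = Dk M U k α} ⊆ Set.range h := by
        rintro D ⟨α, hα, k, rfl⟩
        refine ⟨List.ofFn (fun i : Fin k => α i), ?_⟩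
        have hset : {β ∈ M | ∀ i < (List.ofFn (fun i : Fin k => α i)).length,
            β i = (List.ofFn (fun i : Fin k => α i)).getD i 0} = {β ∈ M | ∀ i < k, β i = α i} := by
          ext β
          simp only [Set.mem_setOf_eq, List.length_ofFn, and_congr_right_iff]
          intro _
          refine forall₂_congr fun i hi => ?_
          rw [List.getD_eq_getElem _ _ (by simpa using hi)]
          simp
        rw [hh]
        simp only [hset]
        rfl
      exact (Set.countable_range h).mono hsub
    · intro O hO x hx
      obtain ⟨α, hα, hxα, hαO⟩ := hSB.2.2 O hO x hx
      have := hD α hα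
      rw [this] at hxα
      obtain ⟨k, hk⟩ := mem_iUnion.1 hxα
      refine ⟨Dk M U k α, ⟨α, hα, k, rfl⟩, hk, ?_⟩
      have : Dk M U k α ⊆ U α := by
        apply Set.biInter_subset_of_mem
        exact ⟨hα, fun i _ => rfl⟩
      exact this.trans hαO
end
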